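/- arXiv:0801.0170 — 3 statements merged into one kernel-verified Lean document; each statement's English description precedes it below -/
import Mathlib

section
/- Every regular space X with π-character πχ(X) ≤ κ and infinite density d(X) = λ has a Shapirovskii π-base: there exist a dense left-separated subset P = {p_α : α < λ} and open sets S = {S_{α,i} : α < λ, i < κ} such that (a) {S_{α,i} : i < κ} is a local π-base at p_α; (b) cl(P_α) ∩ ∪{cl(S_{β,i}) : α ≤ β < λ, i < κ} = ∅ for each α; (c) for every δ of the form κ·ε and every finite A ⊆ [γ(δ),δ) × κ, if ∩_{a∈A} cl(S_a) ≠ ∅ then ∩_{a∈A} cl(S_a) ∩ cl(P_δ) ≠ ∅, where γ is the regressive function of the canonical κ-function. -/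
open Cardinal Set

/-- `ℬ` is a local π-base at `x`: a family of nonempty open sets such that
every open neighbourhood of `x` contains a member. -/
def IsLocalPiBase {X : Type u} [TopologicalSpace X] (x : X) (ℬ : Set (Set X)) : Prop :=
  (∀ B ∈ ℬ, IsOpen B ∧ B.Nonempty) ∧
  ∀ U : Set X, IsOpen U → x ∈ U → ∃ B ∈ ℬ, B ⊆ U

/-- The π-character of a space: the supremum over points of the least size
of a local π-base. -/
noncomputable def piChar (X : Type u) [TopologicalSpace X] : Cardinal.{u} :=
  ⨆ x : X, sInf {c : Cardinal | ∃ ℬ : Set (Set X), #ℬ = c ∧ IsLocalPiBase x ℬ}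

/-- The density of a topological space. -/
noncomputable def density (X : Type u) [TopologicalSpace X] : Cardinal.{u} :=
  sInf {c : Cardinal | ∃ s : Set X, Dense s ∧ #s = c}

namespace ShapAux

open Ordinal
open scoped Classical

/-- minimal cardinality of a final segment of `δ`. -/
noncomputable def mu (δ : Ordinal.{u}) : Cardinal.{u} :=
  sInf {c | ∃ ξ < δ, c = (δ - ξ).card}

/-- the first point after which all tails of `δ` have the minimal cardinality. -/
noncomputable def gam (δ : Ordinal.{u}) : Ordinal.{u} :=
  sInf {ξ | ξ < δ ∧ (δ - ξ).card = mu δ}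

theorem gam_spec {δ : Ordinal.{u}} (h : 0 < δ) :
    gam δ < δ ∧ (δ - gam δ).card = mu δ := by
  have hne : {c | ∃ ξ < δ, c = (δ - ξ).card}.Nonempty := ⟨(δ - 0).card, 0, h, rfl⟩
  obtain ⟨ξ, hξ, hc⟩ := csInf_mem hne
  have : gam δ ∈ {ξ | ξ < δ ∧ (δ - ξ).card = mu δ} :=
    csInf_mem ⟨ξ, hξ, hc.symm⟩
  exact ⟨this.1, this.2⟩

theorem gam_lt {δ : Ordinal.{u}} (h : 0 < δ) : gam δ < δ := (gam_spec h).1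

theorem sub_anti {a b c : Ordinal.{u}} (hab : a ≤ b) (hac : a ≤ c) : c - b ≤ c - a := by
  rw [Ordinal.sub_le]
  calc c = a + (c - a) := (Ordinal.add_sub_cancel_of_le hac).symm
    _ ≤ b + (c - a) := add_le_add_left hab _

theorem tail_card_const {δ ξ : Ordinal.{u}} (h0 : 0 < δ) (h1 : gam δ ≤ ξ) (h2 : ξ < δ) :
    (δ - ξ).card = mu δ := by
  have hle : (δ - ξ).card ≤ mu δ := by
    rw [← (gam_spec h0).2]
    exact Ordinal.card_le_card (sub_anti h1 (gam_lt h0).le)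
  have hge : mu δ ≤ (δ - ξ).card := csInf_le (OrderBot.bddBelow _) ⟨ξ, h2, rfl⟩
  exact le_antisymm hle hge

theorem mu_le_tail {δ ξ : Ordinal.{u}} (h2 : ξ < δ) : mu δ ≤ (δ - ξ).card :=
  csInf_le (OrderBot.bddBelow _) ⟨ξ, h2, rfl⟩

/-- any tail of a multiple of `κ.ord` has cardinality at least `κ`. -/
theorem kappa_le_tail {κ : Cardinal.{u}} (hκ : ℵ₀ ≤ κ) {δ ξ : Ordinal.{u}}
    (hd : κ.ord ∣ δ) (hξ : ξ < δ) : κ ≤ (δ - ξ).card := by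
  obtain ⟨e, rfl⟩ := hd
  have hK0 : κ.ord ≠ 0 := by
    rw [ne_eq, Cardinal.ord_eq_zero]
    exact (aleph0_pos.trans_le hκ).ne'
  set K := κ.ord with hK
  -- decompose ξ
  have hdm := Ordinal.div_add_mod ξ K
  set q := ξ / K with hq
  set r := ξ % K with hr
  have hrK : r < K := Ordinal.mod_lt ξ hK0
  -- K * (q+1) ≤ δ
  have hqe : q < e := by
    rw [hq, Ordinal.div_lt hK0]
    exact hξ
  have hKq1 : K * (q + 1) ≤ K * e := mul_le_mul_right (Order.add_one_le_of_lt hqe) K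
  -- ξ + (K - r) = K * (q+1)
  have hsum : ξ + (K - r) = K * (q + 1) := by
    rw [← hdm, add_assoc, Ordinal.add_sub_cancel_of_le hrK.le, mul_add, mul_one]
  -- K - r ≤ δ - ξ
  have hle : K - r ≤ K * e - ξ := by
    have h3 : ξ + (K - r) ≤ ξ + (K * e - ξ) := by
      rw [hsum, Ordinal.add_sub_cancel_of_le hξ.le]
      exact hKq1
    exact le_of_add_le_add_left h3
  -- card (K - r) = κ
  have hcard : (K - r).card = κ := by
    have h1 : r + (K - r) = K := Ordinal.add_sub_cancel_of_le hrK.le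
    have h2 : r.card + (K - r).card = κ := by
      rw [← Ordinal.card_add, h1, Cardinal.card_ord]
    have hrc : r.card < κ := by
      rw [← Cardinal.lt_ord]; exact hrK
    by_contra hne
    have hlt : (K - r).card < κ := lt_of_le_of_ne (by
      have := Ordinal.card_le_card (Ordinal.sub_le_self K r)
      rwa [Cardinal.card_ord] at this) hne
    exact absurd h2 (ne_of_lt (Cardinal.add_lt_of_lt hκ hrc hlt))
  calc κ = (K - r).card := hcard.symm
    _ ≤ (K * e - ξ).card := Ordinal.card_le_card hle

theorem kappa_le_mu {κ : Cardinal.{u}} (hκ : ℵ₀ ≤ κ) {δ : Ordinal.{u}}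
    (hd : κ.ord ∣ δ) (h0 : 0 < δ) : κ ≤ mu δ := by
  rw [← (gam_spec h0).2]
  exact kappa_le_tail hκ hd (gam_lt h0)

/-! ### tasks -/

noncomputable def maxF (A : Finset (Ordinal.{u} × Ordinal.{u})) : Ordinal.{u} :=
  A.sup Prod.fst

noncomputable def minF (A : Finset (Ordinal.{u} × Ordinal.{u})) : Ordinal.{u} :=
  sInf (Prod.fst '' (A : Set (Ordinal.{u} × Ordinal.{u})))

theorem le_maxF {A : Finset (Ordinal.{u} × Ordinal.{u})} {a} (ha : a ∈ A) :
    a.1 ≤ maxF A := Finset.le_sup (f := Prod.fst) ha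

theorem maxF_lt {A : Finset (Ordinal.{u} × Ordinal.{u})} {δ} (h0 : 0 < δ)
    (h : ∀ a ∈ A, a.1 < δ) : maxF A < δ := by
  classical
  rcases A.eq_empty_or_nonempty with rfl | hA
  · simpa [maxF] using h0
  · exact (Finset.sup_lt_iff (by simpa using h0)).2 fun a ha => h a ha

theorem minF_le {A : Finset (Ordinal.{u} × Ordinal.{u})} {a} (ha : a ∈ A) :
    minF A ≤ a.1 := csInf_le (OrderBot.bddBelow _) ⟨a, ha, rfl⟩

theorem le_minF {A : Finset (Ordinal.{u} × Ordinal.{u})} {c} (hA : A.Nonempty)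
    (h : ∀ a ∈ A, c ≤ a.1) : c ≤ minF A := by
  obtain ⟨a0, ha0⟩ := hA
  exact le_csInf ⟨a0.1, a0, ha0, rfl⟩ (by rintro x ⟨a, ha, rfl⟩; exact h a ha)

variable (κ lam : Cardinal.{u})

/-- `δ` is a relevant stopping level for the task `A`. -/
def Rel (A : Finset (Ordinal.{u} × Ordinal.{u})) (δ : Ordinal.{u}) : Prop :=
  κ.ord ∣ δ ∧ δ ≤ lam.ord ∧ maxF A < δ ∧ gam δ ≤ minF A

/-- least relevant level. -/
noncomputable def dmin (A : Finset (Ordinal.{u} × Ordinal.{u})) : Ordinal.{u} :=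
  sInf {δ | Rel κ lam A δ}

theorem dmin_spec {A : Finset (Ordinal.{u} × Ordinal.{u})} {δ}
    (h : Rel κ lam A δ) : Rel κ lam A (dmin κ lam A) ∧ dmin κ lam A ≤ δ :=
  ⟨csInf_mem (⟨δ, h⟩ : {δ | Rel κ lam A δ}.Nonempty), csInf_le (OrderBot.bddBelow _) h⟩

/-- the tasks owned by level `δ`. -/
def ownT (δ : Ordinal.{u}) : Set (Finset (Ordinal.{u} × Ordinal.{u})) :=
  {A | A.Nonempty ∧ (∀ a ∈ A, a.2 < κ.ord) ∧ Rel κ lam A δ ∧ dmin κ lam A = δ}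

/-- levels that may claim stages in block `η`. -/
def Active (η : Ordinal.{u}) : Set Ordinal.{u} :=
  {δ | δ < lam.ord ∧ ∃ A ∈ ownT κ lam δ, maxF A < κ.ord * (η + 1) ∧ κ.ord * η < δ}

theorem gamma_desc {η δ₁ δ₂ : Ordinal.{u}} (h1 : δ₁ ∈ Active κ lam η)
    (h2 : δ₂ ∈ Active κ lam η) (hlt : δ₁ < δ₂) : gam δ₂ < gam δ₁ := by
  obtain ⟨hδ₂L, A₂, hA₂own, hA₂max, _⟩ := h2
  obtain ⟨hδ₁L, A₁, hA₁own, _, hA₁blk⟩ := h1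
  obtain ⟨hA₂ne, _, hA₂rel, hA₂min⟩ := hA₂own
  obtain ⟨_, _, hA₁rel, _⟩ := hA₁own
  -- δ₁ ≥ K * (η+1)
  obtain ⟨e₁, he₁⟩ := hA₁rel.1
  have hηe : η < e₁ := by
    have := hA₁blk
    rw [he₁] at this
    exact lt_of_mul_lt_mul_left' this
  have hδ₁ge : κ.ord * (η + 1) ≤ δ₁ := by
    rw [he₁]
    exact mul_le_mul_right (Order.add_one_le_of_lt hηe) _
  -- ¬ Rel A₂ δ₁
  have hnrel : ¬ Rel κ lam A₂ δ₁ := by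
    intro hrel
    have := (dmin_spec κ lam hrel).2
    rw [hA₂min] at this
    exact absurd hlt (not_lt.2 this)
  -- hence gam δ₁ > minF A₂
  have : ¬ gam δ₁ ≤ minF A₂ := by
    intro hg
    exact hnrel ⟨hA₁rel.1, hδ₁L.le, lt_of_lt_of_le hA₂max hδ₁ge, hg⟩
  have h3 : minF A₂ < gam δ₁ := not_le.1 this
  exact lt_of_le_of_lt hA₂rel.2.2.2 h3

/-! ### finiteness of `Active` -/

/-- the `n`-th least element of a set of ordinals. -/
noncomputable def nthEl (s : Set Ordinal.{u}) : ℕ → Ordinal.{u}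
  | n => sInf (s \ Set.range fun k : Fin n => nthEl s k)

theorem nthEl_mem {s : Set Ordinal.{u}} (hs : s.Infinite) (n : ℕ) :
    nthEl s n ∈ s \ Set.range fun k : Fin n => nthEl s k := by
  rw [nthEl]
  apply csInf_mem
  have hfin : (Set.range fun k : Fin n => nthEl s k).Finite := Set.finite_range _
  exact (hs.diff hfin).nonempty

theorem nthEl_lt {s : Set Ordinal.{u}} (hs : s.Infinite) {m n : ℕ} (h : m < n) :
    nthEl s m < nthEl s n := by
  have hn := nthEl_mem hs n
  have hle : nthEl s m ≤ nthEl s n := by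
    have : nthEl s m = sInf (s \ Set.range fun k : Fin m => nthEl s k) := by
      rw [nthEl]
    rw [this]
    apply csInf_le (OrderBot.bddBelow _)
    constructor
    · exact hn.1
    · rintro ⟨k, hk⟩
      exact hn.2 ⟨⟨(k : ℕ), lt_trans k.2 h⟩, hk⟩
  rcases lt_or_eq_of_le hle with h' | h'
  · exact h'
  · exact absurd (⟨⟨m, h⟩, h'⟩ : nthEl s n ∈ Set.range fun k : Fin n => nthEl s k) hn.2

theorem no_descending (f : ℕ → Ordinal.{u}) (hf : ∀ n, f (n + 1) < f n) : False := by
  obtain ⟨n, hn⟩ := csInf_mem (Set.range_nonempty f)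
  have h1 : sInf (Set.range f) ≤ f (n + 1) :=
    csInf_le (OrderBot.bddBelow _) (Set.mem_range_self (n + 1))
  rw [← hn] at h1
  exact absurd h1 (not_le.2 (hf n))

theorem Active_finite (η : Ordinal.{u}) : ¬ (Active κ lam η).Infinite := by
  intro hfin
  have hinf : (Active κ lam η).Infinite := hfin
  apply no_descending (fun n => gam (nthEl (Active κ lam η) n))
  intro n
  exact gamma_desc κ lam (nthEl_mem hinf n).1 (nthEl_mem hinf (n + 1)).1
    (nthEl_lt hinf (Nat.lt_succ_self n))

/-! ### stage coding -/

noncomputable def natOf (o : Ordinal.{u}) : ℕ :=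
  if h : o < Ordinal.omega0 then (Ordinal.lt_omega0.1 h).choose else 0

theorem natOf_eq {o : Ordinal.{u}} (h : o < Ordinal.omega0) : ((natOf o : ℕ) : Ordinal.{u}) = o := by
  rw [natOf, dif_pos h]
  exact (Ordinal.lt_omega0.1 h).choose_spec.symm

theorem natOf_cast (n : ℕ) : natOf ((n : ℕ) : Ordinal.{u}) = n := by
  have := natOf_eq (o := ((n : ℕ) : Ordinal.{u})) (Ordinal.nat_lt_omega0 n)
  exact_mod_cast this

/-- rank of a level within the active levels of a block. -/
noncomputable def rankAt (η δ : Ordinal.{u}) : ℕ :=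
  (Active κ lam η ∩ Iio δ).ncard

theorem rank_lt {η δ₁ δ₂ : Ordinal.{u}} (h1 : δ₁ ∈ Active κ lam η)
    (h2 : δ₂ ∈ Active κ lam η) (hlt : δ₁ < δ₂) :
    rankAt κ lam η δ₁ < rankAt κ lam η δ₂ := by
  have hfin : (Active κ lam η ∩ Iio δ₂).Finite :=
    (Set.not_infinite.1 (Active_finite κ lam η)).subset Set.inter_subset_left
  apply Set.ncard_lt_ncard _ hfin
  constructor
  · exact Set.inter_subset_inter_right _ (Set.Iio_subset_Iio hlt.le)
  · intro hsub
    have : δ₁ ∈ Active κ lam η ∩ Iio δ₁ := hsub ⟨h1, hlt⟩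
    exact absurd this.2 (lt_irrefl δ₁)

theorem rank_inj {η δ₁ δ₂ : Ordinal.{u}} (h1 : δ₁ ∈ Active κ lam η)
    (h2 : δ₂ ∈ Active κ lam η) (h : rankAt κ lam η δ₁ = rankAt κ lam η δ₂) : δ₁ = δ₂ := by
  rcases lt_trichotomy δ₁ δ₂ with hlt | he | hlt
  · exact absurd h (ne_of_lt (rank_lt κ lam h1 h2 hlt))
  · exact he
  · exact absurd h.symm (ne_of_lt (rank_lt κ lam h2 h1 hlt))

/-- the stages where the level `δ` may place the task `A`. -/
def allowedW (δ : Ordinal.{u}) (A : Finset (Ordinal.{u} × Ordinal.{u})) : Set Ordinal.{u} :=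
  {α | maxF A < α ∧ α < δ ∧ δ ∈ Active κ lam (α / κ.ord) ∧
    α % κ.ord % Ordinal.omega0 ≠ 0 ∧
    (Nat.unpair (natOf (α % κ.ord % Ordinal.omega0) - 1)).1 = rankAt κ lam (α / κ.ord) δ}

/-- offset re-encoding underlying the injection into `allowedW`. -/
noncomputable def enc (ζ : Ordinal.{u}) (n : ℕ) : Ordinal.{u} :=
  Ordinal.omega0 * (ζ / Ordinal.omega0) +
    ((Nat.pair n (natOf (ζ % Ordinal.omega0)) + 1 : ℕ) : Ordinal.{u})

theorem enc_lt {κ : Cardinal.{u}} (hκ : ℵ₀ ≤ κ) {ζ : Ordinal.{u}} (hζ : ζ < κ.ord)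
    (n : ℕ) : enc ζ n < κ.ord := by
  rcases eq_or_lt_of_le hκ with heq | hlt
  · have hK : κ.ord = Ordinal.omega0 := by rw [← heq, Cardinal.ord_aleph0]
    rw [hK] at hζ ⊢
    rw [enc, Ordinal.div_eq_zero_of_lt hζ, mul_zero, zero_add]
    exact Ordinal.nat_lt_omega0 _
  · rw [Cardinal.lt_ord, enc, Ordinal.card_add, Ordinal.card_mul]
    apply Cardinal.add_lt_of_lt hκ
    · apply Cardinal.mul_lt_of_lt hκ
      · rwa [Ordinal.card_omega0]
      · have hd : ζ / Ordinal.omega0 ≤ ζ :=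
          le_trans (Ordinal.le_mul_right _ Ordinal.omega0_pos) (Ordinal.mul_div_le ζ _)
        calc (ζ / Ordinal.omega0).card ≤ ζ.card := Ordinal.card_le_card hd
          _ < κ := Cardinal.lt_ord.1 hζ
    · rw [Ordinal.card_nat]
      exact lt_of_lt_of_le (Cardinal.nat_lt_aleph0 _) hκ

theorem enc_mod_omega (ζ : Ordinal.{u}) (n : ℕ) :
    enc ζ n % Ordinal.omega0 = ((Nat.pair n (natOf (ζ % Ordinal.omega0)) + 1 : ℕ) : Ordinal.{u}) := by
  rw [enc, Ordinal.mul_add_mod_self, Ordinal.mod_eq_of_lt (Ordinal.nat_lt_omega0 _)]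

theorem enc_inj {ζ₁ ζ₂ : Ordinal.{u}} {n : ℕ}
    (h : enc ζ₁ n = enc ζ₂ n) : ζ₁ = ζ₂ := by
  have hm : ∀ ζ : Ordinal.{u}, enc ζ n / Ordinal.omega0 = ζ / Ordinal.omega0 := by
    intro ζ
    rw [enc, Ordinal.mul_add_div _ Ordinal.omega0_ne_zero,
      Ordinal.div_eq_zero_of_lt (Ordinal.nat_lt_omega0 _), add_zero]
  have hdiv : ζ₁ / Ordinal.omega0 = ζ₂ / Ordinal.omega0 := by
    rw [← hm ζ₁, ← hm ζ₂, h]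
  have hmod : natOf (ζ₁ % Ordinal.omega0) = natOf (ζ₂ % Ordinal.omega0) := by
    have e1 := enc_mod_omega ζ₁ n
    have e2 := enc_mod_omega ζ₂ n
    rw [h] at e1
    rw [e1] at e2
    have : (Nat.pair n (natOf (ζ₁ % Ordinal.omega0)) + 1 : ℕ) =
        (Nat.pair n (natOf (ζ₂ % Ordinal.omega0)) + 1 : ℕ) := by exact_mod_cast e2
    have hp := Nat.succ_injective this
    have := congrArg (fun x => (Nat.unpair x).2) hp
    simpa [Nat.unpair_pair] using this
  have hmod' : ζ₁ % Ordinal.omega0 = ζ₂ % Ordinal.omega0 := by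
    have o1 : ζ₁ % Ordinal.omega0 < Ordinal.omega0 := Ordinal.mod_lt _ Ordinal.omega0_ne_zero
    have o2 : ζ₂ % Ordinal.omega0 < Ordinal.omega0 := Ordinal.mod_lt _ Ordinal.omega0_ne_zero
    rw [← natOf_eq o1, ← natOf_eq o2, hmod]
  calc ζ₁ = Ordinal.omega0 * (ζ₁ / Ordinal.omega0) + ζ₁ % Ordinal.omega0 :=
        (Ordinal.div_add_mod _ _).symm
    _ = Ordinal.omega0 * (ζ₂ / Ordinal.omega0) + ζ₂ % Ordinal.omega0 := by rw [hdiv, hmod']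
    _ = ζ₂ := Ordinal.div_add_mod _ _

/-- stage injection: turns an arbitrary position in `(maxF A, δ)` into an allowed stage. -/
noncomputable def phi (δ α : Ordinal.{u}) : Ordinal.{u} :=
  κ.ord * (α / κ.ord) + enc (α % κ.ord) (rankAt κ lam (α / κ.ord) δ)

theorem phi_basic {κ : Cardinal.{u}} (hκ : ℵ₀ ≤ κ) (lam : Cardinal.{u}) {δ α : Ordinal.{u}} :
    phi κ lam δ α / κ.ord = α / κ.ord ∧
    phi κ lam δ α % κ.ord = enc (α % κ.ord) (rankAt κ lam (α / κ.ord) δ) := by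
  have hK0 : κ.ord ≠ 0 := by
    rw [ne_eq, Cardinal.ord_eq_zero]; exact (aleph0_pos.trans_le hκ).ne'
  have hx : enc (α % κ.ord) (rankAt κ lam (α / κ.ord) δ) < κ.ord :=
    enc_lt hκ (Ordinal.mod_lt _ hK0) _
  constructor
  · rw [phi, Ordinal.mul_add_div _ hK0, Ordinal.div_eq_zero_of_lt hx, add_zero]
  · rw [phi, Ordinal.mul_add_mod_self, Ordinal.mod_eq_of_lt hx]

theorem phi_mem {κ lam : Cardinal.{u}} (hκ : ℵ₀ ≤ κ) {δ α : Ordinal.{u}}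
    {A : Finset (Ordinal.{u} × Ordinal.{u})} (hδL : δ < lam.ord)
    (hA : A ∈ ownT κ lam δ) (h1 : maxF A < α) (h2 : α < δ) :
    phi κ lam δ α ∈ allowedW κ lam δ A := by
  have hK0 : κ.ord ≠ 0 := by
    rw [ne_eq, Cardinal.ord_eq_zero]; exact (aleph0_pos.trans_le hκ).ne'
  obtain ⟨hdvd, _, _, _⟩ := hA.2.2.1
  obtain ⟨e, he⟩ := hdvd
  have hq : α / κ.ord < e := by rw [Ordinal.div_lt hK0, ← he]; exact h2
  have hbasic := phi_basic hκ lam (δ := δ) (α := α)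
  have hαle : α ≤ phi κ lam δ α := by
    conv_lhs => rw [← Ordinal.div_add_mod α κ.ord]
    rw [phi]
    apply add_le_add_right
    rw [enc]
    conv_lhs => rw [← Ordinal.div_add_mod (α % κ.ord) Ordinal.omega0]
    apply add_le_add_right
    conv_lhs => rw [← natOf_eq (Ordinal.mod_lt (α % κ.ord) Ordinal.omega0_ne_zero)]
    have : natOf (α % κ.ord % Ordinal.omega0) ≤
        Nat.pair (rankAt κ lam (α / κ.ord) δ) (natOf (α % κ.ord % Ordinal.omega0)) + 1 :=
      le_trans (Nat.right_le_pair _ _) (Nat.le_succ _)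
    exact Nat.cast_le.2 this
  have hphi_lt : phi κ lam δ α < δ := by
    have hx : enc (α % κ.ord) (rankAt κ lam (α / κ.ord) δ) < κ.ord :=
      enc_lt hκ (Ordinal.mod_lt _ hK0) _
    calc phi κ lam δ α < κ.ord * (α / κ.ord) + κ.ord := add_lt_add_right hx _
      _ = κ.ord * (α / κ.ord + 1) := by rw [mul_add, mul_one]
      _ ≤ κ.ord * e := mul_le_mul_right (Order.add_one_le_of_lt hq) _
      _ = δ := he.symm
  have hActive : δ ∈ Active κ lam (α / κ.ord) := by
    refine ⟨hδL, A, hA, ?_, ?_⟩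
    · calc maxF A < α := h1
        _ < κ.ord * Order.succ (α / κ.ord) := Ordinal.lt_mul_succ_div α hK0
        _ = κ.ord * (α / κ.ord + 1) := by rw [Order.succ_eq_add_one]
    · exact lt_of_le_of_lt (Ordinal.mul_div_le α κ.ord) h2
  have hcode : phi κ lam δ α % κ.ord % Ordinal.omega0 =
      ((Nat.pair (rankAt κ lam (α / κ.ord) δ) (natOf (α % κ.ord % Ordinal.omega0)) + 1 : ℕ) :
        Ordinal.{u}) := by
    rw [hbasic.2, enc_mod_omega]
  refine ⟨lt_of_lt_of_le h1 hαle, hphi_lt, ?_, ?_, ?_⟩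
  · rw [hbasic.1]; exact hActive
  · rw [hcode]
    exact Nat.cast_ne_zero.2 (Nat.succ_ne_zero _)
  · rw [hcode, hbasic.1, natOf_cast, Nat.add_sub_cancel, Nat.unpair_pair]

theorem phi_inj {κ lam : Cardinal.{u}} (hκ : ℵ₀ ≤ κ) {δ α₁ α₂ : Ordinal.{u}}
    (h : phi κ lam δ α₁ = phi κ lam δ α₂) : α₁ = α₂ := by
  have b1 := phi_basic hκ lam (δ := δ) (α := α₁)
  have b2 := phi_basic hκ lam (δ := δ) (α := α₂)
  have hdiv : α₁ / κ.ord = α₂ / κ.ord := by rw [← b1.1, ← b2.1, h]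
  have hmod : enc (α₁ % κ.ord) (rankAt κ lam (α₁ / κ.ord) δ) =
      enc (α₂ % κ.ord) (rankAt κ lam (α₂ / κ.ord) δ) := by
    rw [← b1.2, ← b2.2, h]
  rw [hdiv] at hmod
  have hm : α₁ % κ.ord = α₂ % κ.ord := enc_inj hmod
  calc α₁ = κ.ord * (α₁ / κ.ord) + α₁ % κ.ord := (Ordinal.div_add_mod _ _).symm
    _ = κ.ord * (α₂ / κ.ord) + α₂ % κ.ord := by rw [hdiv, hm]
    _ = α₂ := Ordinal.div_add_mod _ _

/-! ### cardinalities and enumeration -/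

/-- `[a, δ) ≃ [0, δ - a)`. -/
noncomputable def icoEquiv {a δ : Ordinal.{u}} (h : a ≤ δ) :
    ↥(Set.Ico a δ) ≃ ↥(Set.Iio (δ - a)) where
  toFun x := ⟨x.1 - a, by
    have hx := x.2
    rw [Set.mem_Iio, Ordinal.lt_sub, Ordinal.add_sub_cancel_of_le hx.1]
    exact hx.2⟩
  invFun ξ := ⟨a + ξ.1, by
    have hξ := ξ.2
    rw [Set.mem_Iio] at hξ
    exact ⟨le_self_add, Ordinal.lt_sub.1 hξ⟩⟩
  left_inv x := by
    ext
    exact Ordinal.add_sub_cancel_of_le x.2.1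
  right_inv ξ := by
    ext
    exact Ordinal.add_sub_cancel a ξ.1

theorem mk_Ico_ord {a δ : Ordinal.{u}} (h : a ≤ δ) :
    #(Set.Ico a δ) = Cardinal.lift.{u + 1} (δ - a).card := by
  rw [Cardinal.mk_congr (icoEquiv h), Ordinal.mk_Iio_ordinal]

theorem ownT_card {κ lam : Cardinal.{u}} (hκ : ℵ₀ ≤ κ) {δ : Ordinal.{u}}
    (hdvd : κ.ord ∣ δ) (h0 : 0 < δ) :
    #(ownT κ lam δ) ≤ Cardinal.lift.{u + 1} (mu δ) := by
  classical
  set s : Set (Ordinal.{u} × Ordinal.{u}) := Set.Ico (gam δ) δ ×ˢ Set.Iio κ.ord with hs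
  -- injection of ownT into finsets of s
  have hinj : Function.Injective
      (fun A : ↥(ownT κ lam δ) => (A.1.subtype (· ∈ s) : Finset ↥s)) := by
    intro A B hAB
    have hmem : ∀ (C : ↥(ownT κ lam δ)), ∀ x ∈ C.1, x ∈ s := by
      rintro ⟨C, hCne, hC2, hCrel, _⟩ x hx
      refine ⟨⟨?_, ?_⟩, hC2 x hx⟩
      · exact le_trans hCrel.2.2.2 (minF_le hx)
      · exact lt_of_le_of_lt (le_maxF hx) hCrel.2.2.1
    have h1 := Finset.subtype_map_of_mem (hmem A)
    have h2 := Finset.subtype_map_of_mem (hmem B)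
    apply Subtype.ext
    have hAB' : (A.1.subtype (· ∈ s)) = (B.1.subtype (· ∈ s)) := hAB
    rw [← h1, ← h2, hAB']
  -- compute the cardinality of s
  have hmu : κ ≤ mu δ := kappa_le_mu hκ hdvd h0
  have hmu0 : ℵ₀ ≤ mu δ := hκ.trans hmu
  have hsmk : #↥s = Cardinal.lift.{u + 1} (mu δ) := by
    rw [hs, Cardinal.mk_congr (Equiv.Set.prod _ _), Cardinal.mk_prod,
      Cardinal.lift_id, Cardinal.lift_id, mk_Ico_ord (gam_lt h0).le,
      Ordinal.mk_Iio_ordinal, (gam_spec h0).2, Cardinal.card_ord,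
      ← Cardinal.lift_mul]
    congr 1
    exact Cardinal.mul_eq_left hmu0 hmu (aleph0_pos.trans_le hκ).ne'
  have hinf : Infinite ↥s := by
    rw [Cardinal.infinite_iff, hsmk]
    exact le_trans (by simp) (Cardinal.lift_le.2 hmu0)
  calc #(ownT κ lam δ) ≤ #(Finset ↥s) := Cardinal.mk_le_of_injective hinj
    _ = #↥s := Cardinal.mk_finset_of_infinite _
    _ = Cardinal.lift.{u + 1} (mu δ) := hsmk

/-- an enumeration property for the tasks of a level. -/
def IsEnum (δ : Ordinal.{u}) (E : Ordinal.{u} → Finset (Ordinal.{u} × Ordinal.{u})) : Prop :=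
  ∀ A ∈ ownT κ lam δ, ∃ ι < (mu δ).ord, E ι = A

noncomputable def Enum (δ : Ordinal.{u}) : Ordinal.{u} → Finset (Ordinal.{u} × Ordinal.{u}) :=
  if h : ∃ E, IsEnum κ lam δ E then h.choose else fun _ => (∅ : Finset _)

theorem Enum_isEnum {κ lam : Cardinal.{u}} (hκ : ℵ₀ ≤ κ) {δ : Ordinal.{u}}
    (hdvd : κ.ord ∣ δ) (h0 : 0 < δ) : IsEnum κ lam δ (Enum κ lam δ) := by
  have hcard : #(ownT κ lam δ) ≤ #(Set.Iio ((mu δ).ord)) := by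
    rw [Ordinal.mk_Iio_ordinal, Cardinal.card_ord]
    exact ownT_card hκ hdvd h0
  obtain ⟨J⟩ := (Cardinal.le_def _ _).1 hcard
  have hex : ∃ E, IsEnum κ lam δ E := by
    refine ⟨fun ι => if h : ∃ A : ↥(ownT κ lam δ), ((J A : ↥(Set.Iio ((mu δ).ord))) : Ordinal.{u}) = ι
      then h.choose.1 else ∅, ?_⟩
    intro A hA
    refine ⟨(J ⟨A, hA⟩ : ↥(Set.Iio ((mu δ).ord))), (J ⟨A, hA⟩).2, ?_⟩
    have hh : ∃ A' : ↥(ownT κ lam δ),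
        ((J A' : ↥(Set.Iio ((mu δ).ord))) : Ordinal.{u}) = (J ⟨A, hA⟩ : ↥(Set.Iio ((mu δ).ord))) :=
      ⟨⟨A, hA⟩, rfl⟩
    simp only [dif_pos hh]
    have := hh.choose_spec
    have h2 : hh.choose = ⟨A, hA⟩ := J.injective (Subtype.ext this)
    rw [h2]
  rw [Enum, dif_pos hex]
  exact hex.choose_spec

/-! ### the greedy placement and the task function -/

noncomputable def sigma (δ : Ordinal.{u}) : Ordinal.{u} → Ordinal.{u} :=
  Ordinal.lt_wf.fix fun ι rec =>
    sInf (allowedW κ lam δ (Enum κ lam δ ι) \ {x | ∃ ι', ∃ h : ι' < ι, rec ι' h = x})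

theorem sigma_def (δ ι : Ordinal.{u}) :
    sigma κ lam δ ι =
      sInf (allowedW κ lam δ (Enum κ lam δ ι) \
        {x | ∃ ι', ∃ _ : ι' < ι, sigma κ lam δ ι' = x}) := by
  conv_lhs => rw [sigma, WellFounded.fix_eq]
  rfl

theorem delta_isLimit {κ : Cardinal.{u}} (hκ : ℵ₀ ≤ κ) {δ : Ordinal.{u}}
    (hdvd : κ.ord ∣ δ) (h0 : 0 < δ) : Order.IsSuccLimit δ := by
  obtain ⟨e, rfl⟩ := hdvd
  have he : 0 < e := by
    rcases eq_zero_or_pos e with rfl | h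
    · simp at h0
    · exact h
  exact Ordinal.isSuccLimit_mul_left (Cardinal.isSuccLimit_ord hκ) he

theorem stage_exists {κ lam : Cardinal.{u}} (hκ : ℵ₀ ≤ κ) {δ ι : Ordinal.{u}}
    {A : Finset (Ordinal.{u} × Ordinal.{u})} (hδL : δ < lam.ord)
    (hA : A ∈ ownT κ lam δ) (hι : ι < (mu δ).ord) (g : Ordinal.{u} → Ordinal.{u}) :
    (allowedW κ lam δ A \ {x | ∃ ι', ∃ _ : ι' < ι, g ι' = x}).Nonempty := by
  by_contra hcon
  rw [Set.not_nonempty_iff_eq_empty, Set.diff_eq_empty] at hcon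
  have hA' := hA
  -- injection from the allowed window into Iio ι
  have hF : ∀ α : ↥(allowedW κ lam δ A), ∃ ι' : ↥(Set.Iio ι), g ι' = α.1 := by
    rintro ⟨α, hα⟩
    obtain ⟨ι', hι', hg⟩ := hcon hα
    exact ⟨⟨ι', hι'⟩, hg⟩
  choose F hFspec using hF
  have hFinj : Function.Injective F := by
    intro a b hab
    apply Subtype.ext
    rw [← hFspec a, ← hFspec b, hab]
  -- injection from Iio (δ - (maxF A + 1)) into the allowed window
  obtain ⟨hAne, -, hArel, -⟩ := hA'
  have hdvd := hArel.1
  have h0 : 0 < δ := lt_of_le_of_lt zero_le hArel.2.2.1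
  have hlim := delta_isLimit hκ hdvd h0
  have hm1 : maxF A + 1 < δ := by
    have := hlim.succ_lt hArel.2.2.1
    rwa [Order.succ_eq_add_one] at this
  have hG : ∀ ξ : ↥(Set.Iio (δ - (maxF A + 1))),
      phi κ lam δ ((maxF A + 1) + ξ.1) ∈ allowedW κ lam δ A := by
    rintro ⟨ξ, hξ⟩
    rw [Set.mem_Iio] at hξ
    apply phi_mem hκ hδL hA
    · exact lt_of_lt_of_le (lt_add_one _) (le_self_add)
    · exact Ordinal.lt_sub.1 hξ
  have hcomp : Function.Injective
      (fun ξ : ↥(Set.Iio (δ - (maxF A + 1))) => F ⟨_, hG ξ⟩) := by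
    intro a b hab
    have hsub := Subtype.ext_iff.1 (hFinj hab)
    have h2 := phi_inj (lam := lam) hκ hsub
    exact Subtype.ext ((add_right_inj _).1 h2)
  -- cardinal contradiction
  have hcard := Cardinal.mk_le_of_injective hcomp
  rw [Ordinal.mk_Iio_ordinal, Ordinal.mk_Iio_ordinal] at hcard
  have hcard2 : (δ - (maxF A + 1)).card ≤ ι.card := Cardinal.lift_le.1 hcard
  have hminmax : gam δ ≤ maxF A + 1 := by
    obtain ⟨a0, ha0⟩ := hAne
    exact le_trans (le_trans hArel.2.2.2 (le_trans (minF_le ha0) (le_maxF ha0))) (le_self_add)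
  have htail : (δ - (maxF A + 1)).card = mu δ := tail_card_const h0 hminmax hm1
  rw [htail] at hcard2
  have : ι.card < mu δ := Cardinal.lt_ord.1 hι
  exact absurd hcard2 (not_le.2 this)

theorem sigma_spec {κ lam : Cardinal.{u}} (hκ : ℵ₀ ≤ κ) {δ ι : Ordinal.{u}}
    (hδL : δ < lam.ord) (hEnum : Enum κ lam δ ι ∈ ownT κ lam δ) (hι : ι < (mu δ).ord) :
    sigma κ lam δ ι ∈ allowedW κ lam δ (Enum κ lam δ ι) ∧
      ∀ ι' < ι, sigma κ lam δ ι' ≠ sigma κ lam δ ι := by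
  have hne := stage_exists hκ hδL hEnum hι (sigma κ lam δ)
  have hmem := csInf_mem hne
  rw [← sigma_def] at hmem
  exact ⟨hmem.1, fun ι' hlt heq => hmem.2 ⟨ι', hlt, heq⟩⟩

/-- the task function: tells each stage which task to work on. -/
noncomputable def TT : Ordinal.{u} → Finset (Ordinal.{u} × Ordinal.{u}) := fun α =>
  if h : ∃ δι : Ordinal.{u} × Ordinal.{u}, δι.1 < lam.ord ∧
      Enum κ lam δι.1 δι.2 ∈ ownT κ lam δι.1 ∧ δι.2 < (mu δι.1).ord ∧
      sigma κ lam δι.1 δι.2 = α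
  then Enum κ lam h.choose.1 h.choose.2 else ∅

theorem TT_spec {κ lam : Cardinal.{u}} (hκ : ℵ₀ ≤ κ) {δ ι : Ordinal.{u}}
    (hδL : δ < lam.ord) (hEnum : Enum κ lam δ ι ∈ ownT κ lam δ) (hι : ι < (mu δ).ord) :
    TT κ lam (sigma κ lam δ ι) = Enum κ lam δ ι := by
  have hex : ∃ δι : Ordinal.{u} × Ordinal.{u}, δι.1 < lam.ord ∧
      Enum κ lam δι.1 δι.2 ∈ ownT κ lam δι.1 ∧ δι.2 < (mu δι.1).ord ∧
      sigma κ lam δι.1 δι.2 = sigma κ lam δ ι := ⟨(δ, ι), hδL, hEnum, hι, rfl⟩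
  rw [TT, dif_pos hex]
  obtain ⟨hδ'L, hEnum', hι'lt, hσ'⟩ := hex.choose_spec
  have hs1 := sigma_spec hκ hδ'L hEnum' hι'lt
  have hs2 := sigma_spec hκ hδL hEnum hι
  have hw1 := hs1.1
  rw [hσ'] at hw1
  have hw2 := hs2.1
  -- the levels agree
  have hδeq : hex.choose.1 = δ := by
    apply rank_inj κ lam hw1.2.2.1 hw2.2.2.1
    rw [← hw1.2.2.2.2, ← hw2.2.2.2.2]
  rw [hδeq] at hσ' hs1
  -- the indices agree
  have hιeq : hex.choose.2 = ι := by
    rcases lt_trichotomy hex.choose.2 ι with hlt | he | hlt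
    · exact absurd hσ' (hs2.2 hex.choose.2 hlt)
    · exact he
    · exact absurd hσ'.symm (hs1.2 ι hlt)
  rw [hδeq, hιeq]

/-- The key combinatorial fact: every owned task of a level `δ < lam.ord` is
scheduled, after all its coordinates, before `δ`, at a non-density stage. -/
theorem task_stage {κ lam : Cardinal.{u}} (hκ : ℵ₀ ≤ κ) {δ : Ordinal.{u}}
    {A : Finset (Ordinal.{u} × Ordinal.{u})} (hδL : δ < lam.ord) (hA : A ∈ ownT κ lam δ) :
    ∃ α, maxF A < α ∧ α < δ ∧ TT κ lam α = A ∧ α % κ.ord % Ordinal.omega0 ≠ 0 := by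
  have hdvd := hA.2.2.1.1
  have h0 : 0 < δ := lt_of_le_of_lt zero_le hA.2.2.1.2.2.1
  obtain ⟨ι, hι, hE⟩ := Enum_isEnum hκ hdvd h0 A hA
  have hEnum : Enum κ lam δ ι ∈ ownT κ lam δ := by rw [hE]; exact hA
  have hs := sigma_spec hκ hδL hEnum hι
  refine ⟨sigma κ lam δ ι, ?_, hs.1.2.1, ?_, hs.1.2.2.2.1⟩
  · have := hs.1.1
    rwa [hE] at this
  · rw [TT_spec hκ hδL hEnum hι, hE]

/-! ### density stage coding -/

noncomputable def Psi (ξ : Ordinal.{u}) : Ordinal.{u} :=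
  if lam ≤ κ then ξ else κ.ord * ξ

theorem Psi_lt {κ lam : Cardinal.{u}} (hlam : ℵ₀ ≤ lam) {ξ : Ordinal.{u}}
    (hξ : ξ < lam.ord) : Psi κ lam ξ < lam.ord := by
  rw [Psi]
  split_ifs with h
  · exact hξ
  · rw [Cardinal.lt_ord, Ordinal.card_mul, Cardinal.card_ord]
    exact Cardinal.mul_lt_of_lt hlam (not_le.1 h) (Cardinal.lt_ord.1 hξ)

theorem Psi_inj {κ lam : Cardinal.{u}} (hκ : ℵ₀ ≤ κ) {ξ₁ ξ₂ : Ordinal.{u}}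
    (h : Psi κ lam ξ₁ = Psi κ lam ξ₂) : ξ₁ = ξ₂ := by
  have hK0 : (0 : Ordinal.{u}) < κ.ord := by
    have : κ.ord ≠ 0 := by
      rw [ne_eq, Cardinal.ord_eq_zero]
      exact (aleph0_pos.trans_le hκ).ne'
    exact pos_iff_ne_zero.2 this
  rw [Psi, Psi] at h
  split_ifs at h with hc
  · exact h
  · exact le_antisymm ((mul_le_mul_iff_of_pos_left hK0).1 h.le)
      ((mul_le_mul_iff_of_pos_left hK0).1 h.ge)

theorem Psi_code {κ lam : Cardinal.{u}} (hc : ¬ lam ≤ κ) (ξ : Ordinal.{u}) :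
    Psi κ lam ξ % κ.ord % Ordinal.omega0 = 0 := by
  rw [Psi, if_neg hc, Ordinal.mul_mod, Ordinal.zero_mod]

/-! ### topological helpers -/

section Topology

variable {X : Type u} [TopologicalSpace X] [T3Space X]

theorem regular_sep {C : Set X} (hC : IsClosed C) {x : X} (hx : x ∉ C) :
    ∃ V : Set X, IsOpen V ∧ x ∈ V ∧ closure V ∩ C = ∅ := by
  have hmem : Cᶜ ∈ nhds x := hC.isOpen_compl.mem_nhds hx
  obtain ⟨N, ⟨hN, hNc⟩, hNsub⟩ := (closed_nhds_basis x).mem_iff.1 hmem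
  refine ⟨interior N, isOpen_interior, mem_interior_iff_mem_nhds.2 hN, ?_⟩
  rw [Set.eq_empty_iff_forall_notMem]
  intro y hy
  have h1 : y ∈ N := by
    have h2 : closure (interior N) ⊆ N :=
      le_trans (closure_mono (interior_subset : interior N ⊆ N)) hNc.closure_eq.le
    exact h2 hy.1
  exact hNsub h1 hy.2

theorem pibase_all (x : X) : IsLocalPiBase x {B : Set X | IsOpen B ∧ B.Nonempty} := by
  constructor
  · exact fun B hB => hB
  · intro U hU hxU
    exact ⟨U, ⟨hU, ⟨x, hxU⟩⟩, subset_rfl⟩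

theorem exists_pibase {κ : Cardinal.{u}} (hπ : piChar X ≤ κ) (x : X) {V : Set X}
    (hV : IsOpen V) (hxV : x ∈ V) :
    ∃ ℬ : Set (Set X), #ℬ ≤ κ ∧ ℬ.Nonempty ∧
      (∀ B ∈ ℬ, IsOpen B ∧ B.Nonempty ∧ B ⊆ V) ∧ IsLocalPiBase x ℬ := by
  have hx : sInf {c : Cardinal | ∃ ℬ : Set (Set X), #ℬ = c ∧ IsLocalPiBase x ℬ} ≤ κ :=
    le_trans (le_ciSup (Cardinal.bddAbove_range _) x) hπ
  have hne : {c : Cardinal | ∃ ℬ : Set (Set X), #ℬ = c ∧ IsLocalPiBase x ℬ}.Nonempty :=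
    ⟨_, {B : Set X | IsOpen B ∧ B.Nonempty}, rfl, pibase_all x⟩
  obtain ⟨ℬ₀, hcard, hπb⟩ := csInf_mem hne
  have hcard' : #ℬ₀ ≤ κ := by rw [hcard]; exact hx
  refine ⟨{B ∈ ℬ₀ | B ⊆ V}, ?_, ?_, ?_, ?_, ?_⟩
  · exact le_trans (Cardinal.mk_le_mk_of_subset (Set.sep_subset _ _)) hcard'
  · obtain ⟨B, hB, hBV⟩ := hπb.2 V hV hxV
    exact ⟨B, hB, hBV⟩
  · intro B hB
    exact ⟨(hπb.1 B hB.1).1, (hπb.1 B hB.1).2, hB.2⟩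
  · intro B hB
    exact ⟨(hπb.1 B hB.1).1, (hπb.1 B hB.1).2⟩
  · intro U hU hxU
    obtain ⟨B, hB, hBsub⟩ := hπb.2 (U ∩ V) (hU.inter hV) ⟨hxU, hxV⟩
    exact ⟨B, ⟨hB, hBsub.trans Set.inter_subset_right⟩, hBsub.trans Set.inter_subset_left⟩

theorem index_family {κ : Cardinal.{u}} (hκ : ℵ₀ ≤ κ) {ℬ : Set (Set X)}
    (hne : ℬ.Nonempty) (hcard : #ℬ ≤ κ) :
    ∃ Sfun : Ordinal.{u} → Set X, (∀ i, Sfun i ∈ ℬ) ∧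
      {B : Set X | ∃ i < κ.ord, B = Sfun i} = ℬ := by
  classical
  obtain ⟨B₀, hB₀⟩ := hne
  have hle : Cardinal.lift.{u + 1} #ℬ ≤ #(Set.Iio κ.ord) := by
    rw [Ordinal.mk_Iio_ordinal, Cardinal.card_ord]
    exact Cardinal.lift_le.2 hcard
  have hle' : Cardinal.lift.{u + 1} #↥ℬ ≤ Cardinal.lift.{u} #(Set.Iio κ.ord) := by
    rw [Cardinal.lift_id'.{u, u + 1} (#(Set.Iio κ.ord))]
    exact hle
  obtain ⟨J⟩ := Cardinal.lift_mk_le'.1 hle'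
  refine ⟨fun i => if h : ∃ B : ↥ℬ, ((J B : ↥(Set.Iio κ.ord)) : Ordinal.{u}) = i
    then h.choose.1 else B₀, ?_, ?_⟩
  · intro i
    dsimp only
    split_ifs with h
    · exact h.choose.2
    · exact hB₀
  · apply Set.eq_of_subset_of_subset
    · rintro B ⟨i, hi, rfl⟩
      dsimp only
      split_ifs with h
      · exact h.choose.2
      · exact hB₀
    · intro B hB
      refine ⟨(J ⟨B, hB⟩ : ↥(Set.Iio κ.ord)), (J ⟨B, hB⟩).2, ?_⟩
      have hh : ∃ B' : ↥ℬ, ((J B' : ↥(Set.Iio κ.ord)) : Ordinal.{u}) =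
          ((J ⟨B, hB⟩ : ↥(Set.Iio κ.ord)) : Ordinal.{u}) := ⟨⟨B, hB⟩, rfl⟩
      simp only [dif_pos hh]
      have h2 : hh.choose = ⟨B, hB⟩ := J.injective (Subtype.ext hh.choose_spec)
      rw [h2]

end Topology

end ShapAux



/-- Every regular space `X` with `πχ(X) ≤ κ` and infinite density `λ` has a
Shapirovskii π-base: a regressive `γ`, a dense left-separated enumeration
`⟨p_α : α < λ⟩` and open sets `S_{α,i}` (`α < λ`, `i < κ`) such that
(a) `{S_{α,i} : i < κ}` is a local π-base at `p_α`;
(b) `cl {p_β : β < α}` misses every `cl S_{β,i}` with `β ≥ α`;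
(c) for every nonzero `δ = κ·ε` (with `δ ≤ λ`) and every finite
`A ⊆ [γ δ, δ) × κ`, if `⋂_{a ∈ A} cl S_a ≠ ∅` then it meets `cl {p_α : α < δ}`. -/
theorem exists_shapirovskii_pi_base (X : Type u) [TopologicalSpace X] [T3Space X]
    (κ lam : Cardinal.{u}) (hκ : ℵ₀ ≤ κ)
    (hπ : piChar X ≤ κ) (hlam : ℵ₀ ≤ lam) (hd : density X = lam) :
    ∃ (γ : Ordinal.{u} → Ordinal.{u}) (p : Ordinal.{u} → X)
      (S : Ordinal.{u} → Ordinal.{u} → Set X),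
      (∀ δ : Ordinal, 0 < δ → γ δ < δ) ∧
      Dense (p '' Set.Iio lam.ord) ∧
      (∀ δ < lam.ord, closure (p '' Set.Iio δ) ∩ (p '' Set.Ico δ lam.ord) = ∅) ∧
      (∀ α < lam.ord, IsLocalPiBase (p α) {B : Set X | ∃ i < κ.ord, B = S α i}) ∧
      (∀ α < lam.ord,
        closure (p '' Set.Iio α) ∩
          (⋃ β ∈ Set.Ico α lam.ord, ⋃ i ∈ Set.Iio κ.ord, closure (S β i)) = ∅) ∧
      (∀ ε δ : Ordinal, δ = κ.ord * ε → δ ≠ 0 → δ ≤ lam.ord →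
        ∀ A : Finset (Ordinal × Ordinal),
          (∀ a ∈ A, γ δ ≤ a.1 ∧ a.1 < δ ∧ a.2 < κ.ord) →
          (⋂ a ∈ A, closure (S a.1 a.2)).Nonempty →
          ((⋂ a ∈ A, closure (S a.1 a.2)) ∩ closure (p '' Set.Iio δ)).Nonempty) := by
  classical
  -- `X` is nonempty
  have hX : Nonempty X := by
    by_contra hne
    rw [not_nonempty_iff] at hne
    have hdense : Dense (∅ : Set X) := fun x => (hne.false x).elim
    have h0 : density X ≤ #(∅ : Set X) :=
      csInf_le (OrderBot.bddBelow _) ⟨∅, hdense, rfl⟩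
    rw [hd] at h0
    simp only [Cardinal.mk_emptyCollection] at h0
    exact absurd (lt_of_lt_of_le aleph0_pos hlam) (not_lt.2 h0)
  have hκ0 : κ.ord ≠ 0 := by
    rw [ne_eq, Cardinal.ord_eq_zero]
    exact (aleph0_pos.trans_le hκ).ne'
  have hLpos : (0 : Ordinal.{u}) < lam.ord := by
    rw [Cardinal.lt_ord]
    simpa using aleph0_pos.trans_le hlam
  -- a dense set of the minimal cardinality
  obtain ⟨D, hDdense, hDcard⟩ : ∃ s : Set X, Dense s ∧ #s = lam := by
    have hne : {c : Cardinal | ∃ s : Set X, Dense s ∧ #s = c}.Nonempty :=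
      ⟨#(Set.univ : Set X), Set.univ, dense_univ, rfl⟩
    have hmem : density X ∈ {c : Cardinal | ∃ s : Set X, Dense s ∧ #s = c} := csInf_mem hne
    obtain ⟨s, hs, hsc⟩ := hmem
    exact ⟨s, hs, by rw [hsc, hd]⟩
  -- an enumeration of the dense set
  obtain ⟨e⟩ : Nonempty (↥(Set.Iio lam.ord) ≃ ↥D) := by
    apply Cardinal.lift_mk_eq'.1
    rw [Cardinal.lift_id'.{u, u + 1} (#(Set.Iio lam.ord)), Ordinal.mk_Iio_ordinal,
      Cardinal.card_ord, hDcard]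
  set d : Ordinal.{u} → X := fun ξ =>
    if h : ξ < lam.ord then (e ⟨ξ, h⟩ : X) else (e ⟨0, hLpos⟩ : X) with hddef
  have hdenum : ∀ y ∈ D, ∃ ξ, ξ < lam.ord ∧ d ξ = y := by
    intro y hy
    refine ⟨(e.symm ⟨y, hy⟩ : Ordinal.{u}), (e.symm ⟨y, hy⟩).2, ?_⟩
    rw [hddef]
    dsimp only
    have hmem : ((e.symm ⟨y, hy⟩ : ↥(Set.Iio lam.ord)) : Ordinal.{u}) < lam.ord := by
      have := (e.symm ⟨y, hy⟩).2
      rwa [Set.mem_Iio] at this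
    rw [dif_pos hmem]
    have : (⟨(e.symm ⟨y, hy⟩ : Ordinal.{u}), hmem⟩ :
        ↥(Set.Iio lam.ord)) = e.symm ⟨y, hy⟩ := Subtype.ext rfl
    rw [this, Equiv.apply_symm_apply]
  -- the default value
  set v₀ : X × (Ordinal.{u} → Set X) := (hX.some, fun _ => (∅ : Set X)) with hv₀
  -- one step of the construction
  have step : ∀ (α : Ordinal.{u}) (g : Ordinal.{u} → X × (Ordinal.{u} → Set X)),
      ∃ v : X × (Ordinal.{u} → Set X),
        α < lam.ord → (
        (v.1 ∉ closure ((fun β => (g β).1) '' Set.Iio α)) ∧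
        (∀ ξ, ξ < lam.ord → ShapAux.Psi κ lam ξ = α →
          d ξ ∉ closure ((fun β => (g β).1) '' Set.Iio α) → v.1 = d ξ) ∧
        ((¬ ∃ ξ, ξ < lam.ord ∧ ShapAux.Psi κ lam ξ = α) →
          ((⋂ a ∈ ShapAux.TT κ lam α, closure ((g a.1).2 a.2)) \
              closure ((fun β => (g β).1) '' Set.Iio α)).Nonempty →
          v.1 ∈ (⋂ a ∈ ShapAux.TT κ lam α, closure ((g a.1).2 a.2)) \
            closure ((fun β => (g β).1) '' Set.Iio α)) ∧
        (∃ V : Set X, IsOpen V ∧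
          closure V ∩ closure ((fun β => (g β).1) '' Set.Iio α) = ∅ ∧
          (∀ i, IsOpen (v.2 i) ∧ (v.2 i).Nonempty ∧ v.2 i ⊆ V) ∧
          IsLocalPiBase v.1 {B : Set X | ∃ i < κ.ord, B = v.2 i})) := by
    intro α g
    by_cases hαL : α < lam.ord
    swap
    · exact ⟨v₀, fun h => absurd h hαL⟩
    set P : Set X := (fun β => (g β).1) '' Set.Iio α with hPdef
    -- P is not dense
    have hPcard : #P < lam := by
      have h1 : Cardinal.lift.{u + 1} #P ≤ Cardinal.lift.{u} #(Set.Iio α) :=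
        Cardinal.mk_image_le_lift
      rw [Ordinal.mk_Iio_ordinal, Cardinal.lift_lift] at h1
      have h2 : #P ≤ α.card := Cardinal.lift_le.1 h1
      exact lt_of_le_of_lt h2 (Cardinal.lt_ord.1 hαL)
    have hPnd : ¬ Dense P := by
      intro hdense
      have h0 : density X ≤ #P := csInf_le (OrderBot.bddBelow _) ⟨P, hdense, rfl⟩
      rw [hd] at h0
      exact absurd hPcard (not_lt.2 h0)
    obtain ⟨x₀, hx₀⟩ : ∃ x₀ : X, x₀ ∉ closure P := by
      by_contra hcon
      push_neg at hcon
      exact hPnd fun x => hcon x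
    -- choose the point
    obtain ⟨x, hx1, hx2, hx3⟩ : ∃ x : X, x ∉ closure P ∧
        (∀ ξ, ξ < lam.ord → ShapAux.Psi κ lam ξ = α →
          d ξ ∉ closure P → x = d ξ) ∧
        ((¬ ∃ ξ, ξ < lam.ord ∧ ShapAux.Psi κ lam ξ = α) →
          ((⋂ a ∈ ShapAux.TT κ lam α, closure ((g a.1).2 a.2)) \ closure P).Nonempty →
          x ∈ (⋂ a ∈ ShapAux.TT κ lam α, closure ((g a.1).2 a.2)) \ closure P) := by
      by_cases hdens : ∃ ξ, ξ < lam.ord ∧ ShapAux.Psi κ lam ξ = α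
      · by_cases htar : d hdens.choose ∉ closure P
        · refine ⟨d hdens.choose, htar, ?_, fun hc => absurd hdens hc⟩
          intro ξ hξ hPsi _
          have h1 := hdens.choose_spec
          have : hdens.choose = ξ := ShapAux.Psi_inj hκ (h1.2.trans hPsi.symm)
          rw [this]
        · push_neg at htar
          refine ⟨x₀, hx₀, ?_, fun hc => absurd hdens hc⟩
          intro ξ hξ hPsi hd'
          have h1 := hdens.choose_spec
          have : hdens.choose = ξ := ShapAux.Psi_inj hκ (h1.2.trans hPsi.symm)
          rw [this] at htar
          exact absurd htar (by simpa using hd')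
      · by_cases hW : ((⋂ a ∈ ShapAux.TT κ lam α, closure ((g a.1).2 a.2)) \
            closure P).Nonempty
        · obtain ⟨x, hx⟩ := hW
          exact ⟨x, hx.2, fun ξ hξ hPsi _ => absurd ⟨ξ, hξ, hPsi⟩ hdens,
            fun _ _ => hx⟩
        · exact ⟨x₀, hx₀, fun ξ hξ hPsi _ => absurd ⟨ξ, hξ, hPsi⟩ hdens,
            fun _ hW' => absurd hW' hW⟩
    -- choose the π-base
    obtain ⟨V, hVopen, hxV, hVP⟩ := ShapAux.regular_sep isClosed_closure hx1
    obtain ⟨ℬ, hℬcard, hℬne, hℬmem, hℬpb⟩ := ShapAux.exists_pibase hπ x hVopen hxV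
    obtain ⟨Sfun, hS1, hS2⟩ := ShapAux.index_family hκ hℬne hℬcard
    refine ⟨(x, Sfun), fun _ => ⟨hx1, hx2, hx3, V, hVopen, hVP, ?_, ?_⟩⟩
    · intro i
      exact hℬmem _ (hS1 i)
    · rw [hS2]
      exact hℬpb
  choose stepF stepSpec using step
  -- the transfinite recursion
  set build : Ordinal.{u} → X × (Ordinal.{u} → Set X) :=
    Ordinal.lt_wf.fix
      (fun α rec => stepF α (fun β => if h : β < α then rec β h else v₀)) with hbuild
  have build_eq : ∀ α : Ordinal.{u},
      build α = stepF α (fun β => if h : β < α then build β else v₀) := by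
    intro α
    rw [hbuild]
    conv_lhs => rw [WellFounded.fix_eq]
  set p : Ordinal.{u} → X := fun α => (build α).1 with hpdef
  set S : Ordinal.{u} → Ordinal.{u} → Set X := fun α i => (build α).2 i with hSdef
  -- the guarded view of the construction below a stage agrees with `p`, `S`
  have himg : ∀ α : Ordinal.{u},
      ((fun β => ((if h : β < α then build β else v₀) : X × (Ordinal.{u} → Set X)).1) ''
        Set.Iio α) = p '' Set.Iio α := by
    intro α
    apply Set.image_congr
    intro β hβ
    rw [Set.mem_Iio] at hβ
    rw [dif_pos hβ]
  -- the specification at each stage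
  have hspec := fun (α : Ordinal.{u}) (hα : α < lam.ord) => by
    have h := stepSpec α (fun β => if h : β < α then build β else v₀) hα
    rw [← build_eq α] at h
    exact h
  -- massaged stage specifications
  have hPnotin : ∀ α, α < lam.ord → p α ∉ closure (p '' Set.Iio α) := by
    intro α hα
    have h := (hspec α hα).1
    rwa [himg α] at h
  have hdens2 : ∀ α, α < lam.ord → ∀ ξ, ξ < lam.ord → ShapAux.Psi κ lam ξ = α →
      d ξ ∉ closure (p '' Set.Iio α) → p α = d ξ := by
    intro α hα ξ hξ hPsi hdc
    have h := (hspec α hα).2.1 ξ hξ hPsi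
    rw [himg α] at h
    exact h hdc
  have htask : ∀ α, α < lam.ord → (¬ ∃ ξ, ξ < lam.ord ∧ ShapAux.Psi κ lam ξ = α) →
      ((⋂ a ∈ ShapAux.TT κ lam α,
          closure (((if h : a.1 < α then build a.1 else v₀)).2 a.2)) \
        closure (p '' Set.Iio α)).Nonempty →
      p α ∈ (⋂ a ∈ ShapAux.TT κ lam α,
          closure (((if h : a.1 < α then build a.1 else v₀)).2 a.2)) \
        closure (p '' Set.Iio α) := by
    intro α hα hnd hW
    have h := (hspec α hα).2.2.1 hnd
    rw [himg α] at h
    exact h hW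
  have hpib : ∀ α, α < lam.ord → ∃ V : Set X, IsOpen V ∧
      closure V ∩ closure (p '' Set.Iio α) = ∅ ∧
      (∀ i, IsOpen (S α i) ∧ (S α i).Nonempty ∧ S α i ⊆ V) ∧
      IsLocalPiBase (p α) {B : Set X | ∃ i < κ.ord, B = S α i} := by
    intro α hα
    have h := (hspec α hα).2.2.2
    rw [himg α] at h
    exact h
  -- the family is dense
  have hDsub : D ⊆ closure (p '' Set.Iio lam.ord) := by
    intro y hy
    obtain ⟨ξ, hξ, hdy⟩ := hdenum y hy
    have hα : ShapAux.Psi κ lam ξ < lam.ord := ShapAux.Psi_lt hlam hξ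
    by_cases hc : d ξ ∈ closure (p '' Set.Iio (ShapAux.Psi κ lam ξ))
    · rw [← hdy]
      exact closure_mono (Set.image_mono (Set.Iio_subset_Iio hα.le)) hc
    · have h2 := hdens2 _ hα ξ hξ rfl hc
      rw [← hdy, ← h2]
      exact subset_closure (Set.mem_image_of_mem p hα)
  have hPdense : Dense (p '' Set.Iio lam.ord) := by
    rw [dense_iff_closure_eq]
    apply Set.eq_univ_of_univ_subset
    calc Set.univ = closure D := hDdense.closure_eq.symm
      _ ⊆ closure (closure (p '' Set.Iio lam.ord)) := closure_mono hDsub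
      _ = closure (p '' Set.Iio lam.ord) := closure_closure
  -- assemble the conclusions
  refine ⟨fun δ => if δ = 0 then 0 else ShapAux.gam δ, p, S, ?_, hPdense, ?_, ?_, ?_, ?_⟩
  · -- γ is regressive
    intro δ hδ
    simp only [if_neg hδ.ne']
    exact ShapAux.gam_lt hδ
  · -- left-separation
    intro δ hδ
    rw [Set.eq_empty_iff_forall_notMem]
    rintro x ⟨hx1, β, ⟨hβ1, hβ2⟩, rfl⟩
    exact hPnotin β hβ2
      (closure_mono (Set.image_mono (Set.Iio_subset_Iio hβ1)) hx1)
  · -- local π-bases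
    intro α hα
    obtain ⟨V, h1, h2, h3, h4⟩ := hpib α hα
    exact h4
  · -- strong left-separation
    intro α hα
    rw [Set.eq_empty_iff_forall_notMem]
    rintro x ⟨hx1, hx2⟩
    simp only [Set.mem_iUnion] at hx2
    obtain ⟨β, hβ, i, hi, hxc⟩ := hx2
    obtain ⟨V, hVopen, hVP, hVS, _⟩ := hpib β hβ.2
    have h1 : x ∈ closure V := closure_mono (hVS i).2.2 hxc
    have h2 : x ∈ closure (p '' Set.Iio β) :=
      closure_mono (Set.image_mono (Set.Iio_subset_Iio hβ.1)) hx1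
    have : x ∈ closure V ∩ closure (p '' Set.Iio β) := ⟨h1, h2⟩
    rw [hVP] at this
    exact this
  · -- the Shapirovskii property
    intro ε δ hδε hδ0 hδL A hA hW
    rcases A.eq_empty_or_nonempty with rfl | hAne
    · simp only [Finset.notMem_empty, Set.iInter_of_empty, Set.iInter_univ,
        Set.univ_inter]
      have h0δ : (0 : Ordinal.{u}) < δ := pos_iff_ne_zero.2 hδ0
      exact ⟨p 0, subset_closure (Set.mem_image_of_mem p h0δ)⟩
    -- the task is relevant at δ
    have h0δ : (0 : Ordinal.{u}) < δ := pos_iff_ne_zero.2 hδ0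
    have hRel : ShapAux.Rel κ lam A δ := by
      refine ⟨⟨ε, hδε⟩, hδL, ShapAux.maxF_lt h0δ (fun a ha => (hA a ha).2.1), ?_⟩
      apply ShapAux.le_minF hAne
      intro a ha
      have h5 := (hA a ha).1
      simpa only [if_neg hδ0] using h5
    obtain ⟨hRel', hδ'le⟩ := ShapAux.dmin_spec κ lam hRel
    by_cases hδ'L : (ShapAux.dmin κ lam A) < lam.ord
    · -- the task was scheduled below (ShapAux.dmin κ lam A)
      have hown : A ∈ ShapAux.ownT κ lam (ShapAux.dmin κ lam A) :=
        ⟨hAne, fun a ha => (hA a ha).2.2, hRel', rfl⟩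
      obtain ⟨α, hαmax, hαδ', hTT, hcode⟩ := ShapAux.task_stage hκ hδ'L hown
      have hαL : α < lam.ord := hαδ'.trans hδ'L
      have hαδ : α < δ := lt_of_lt_of_le hαδ' hδ'le
      -- it is not a density stage
      have hnd : ¬ ∃ ξ, ξ < lam.ord ∧ ShapAux.Psi κ lam ξ = α := by
        rintro ⟨ξ, hξ, hPsi⟩
        have hlamκ : ¬ lam ≤ κ := by
          intro hle
          have h1 : lam.ord ≤ κ.ord := Cardinal.ord_le_ord.2 hle
          have h2 : κ.ord ≤ (ShapAux.dmin κ lam A) := by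
            obtain ⟨e', he'⟩ := hRel'.1
            have he'pos : 0 < e' := by
              rcases eq_zero_or_pos e' with rfl | h
              · exfalso
                rw [mul_zero] at he'
                rw [he'] at hαδ'
                exact not_lt_zero hαδ'
              · exact h
            rw [he']
            exact Ordinal.le_mul_left _ he'pos
          exact absurd (lt_of_lt_of_le hδ'L h1) (not_lt.2 h2)
        have := ShapAux.Psi_code (κ := κ) (lam := lam) hlamκ ξ
        rw [hPsi] at this
        exact hcode this
      -- the guarded intersection agrees with the true one
      have hIeq : (⋂ a ∈ ShapAux.TT κ lam α,
          closure (((if h : a.1 < α then build a.1 else v₀)).2 a.2)) =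
          ⋂ a ∈ A, closure (S a.1 a.2) := by
        rw [hTT]
        apply Set.iInter₂_congr
        intro a ha
        have haα : a.1 < α := lt_of_le_of_lt (ShapAux.le_maxF ha) hαmax
        rw [dif_pos haα]
      by_cases hWP : ((⋂ a ∈ A, closure (S a.1 a.2)) \ closure (p '' Set.Iio α)).Nonempty
      · have h := htask α hαL hnd (by rw [hIeq]; exact hWP)
        rw [hIeq] at h
        refine ⟨p α, h.1, ?_⟩
        exact subset_closure (Set.mem_image_of_mem p hαδ)
      · rw [Set.not_nonempty_iff_eq_empty, Set.diff_eq_empty] at hWP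
        obtain ⟨y, hy⟩ := hW
        refine ⟨y, hy, ?_⟩
        have : y ∈ closure (p '' Set.Iio α) := hWP hy
        exact closure_mono (Set.image_mono (Set.Iio_subset_Iio hαδ.le)) this
    · -- (ShapAux.dmin κ lam A) = lam.ord, hence δ = lam.ord and the enumeration is dense in X
      have hδeq : δ = lam.ord := le_antisymm hδL (by
        have := hδ'le
        rw [not_lt] at hδ'L
        calc lam.ord ≤ (ShapAux.dmin κ lam A) := hδ'L
          _ ≤ δ := hδ'le)
      obtain ⟨y, hy⟩ := hW
      refine ⟨y, hy, ?_⟩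
      rw [hδeq, hPdense.closure_eq]
      exact Set.mem_univ y
end

section
/- Let X be a regular initially κ-compact space with πχ(X) = κ and no free sequences of length κ⁺. Then any Shapirovskii π-base S for X is point-κ: every point of X belongs to at most κ members of S; equivalently, any subfamily R ⊆ S with |R| = κ⁺ has empty intersection. -/
open Cardinal Set

def IsFreeSeq {X : Type u} [TopologicalSpace X] (μ : Ordinal.{u}) (p : Ordinal.{u} → X) : Prop :=
  ∀ δ < μ, closure (p '' Set.Iio δ) ∩ closure (p '' Set.Ico δ μ) = ∅

def InitiallyCompact (X : Type u) [TopologicalSpace X] (κ : Cardinal.{u}) : Prop :=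
  ∀ 𝒰 : Set (Set X), (∀ U ∈ 𝒰, IsOpen U) → #𝒰 ≤ κ → ⋃₀ 𝒰 = Set.univ →
    ∃ 𝒱 ⊆ 𝒰, 𝒱.Finite ∧ ⋃₀ 𝒱 = Set.univ

lemma fip_of_initiallyCompact {X : Type u} [TopologicalSpace X] {κ : Cardinal.{u}}
    (hcomp : InitiallyCompact X κ) (𝒞 : Set (Set X)) (hcl : ∀ C ∈ 𝒞, IsClosed C)
    (hcard : #𝒞 ≤ κ)
    (hfin : ∀ 𝒟 : Finset (Set X), ↑𝒟 ⊆ 𝒞 → (⋂₀ (𝒟 : Set (Set X))).Nonempty) :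
    (⋂₀ 𝒞).Nonempty := by
  classical
  by_contra h
  rw [Set.not_nonempty_iff_eq_empty] at h
  have hcover : ⋃₀ (compl '' 𝒞) = Set.univ := by
    ext z
    simp only [Set.mem_sUnion, Set.mem_image, Set.mem_univ, iff_true]
    have hz : z ∉ ⋂₀ 𝒞 := by rw [h]; exact Set.notMem_empty z
    rw [Set.mem_sInter] at hz
    push_neg at hz
    obtain ⟨C, hC, hzC⟩ := hz
    exact ⟨Cᶜ, ⟨C, hC, rfl⟩, hzC⟩
  obtain ⟨𝒱, h𝒱sub, h𝒱fin, h𝒱cov⟩ := hcomp (compl '' 𝒞)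
    (by rintro U ⟨C, hC, rfl⟩; exact (hcl C hC).isOpen_compl)
    (le_trans Cardinal.mk_image_le hcard) hcover
  have hsub : compl '' 𝒱 ⊆ 𝒞 := by
    rintro D ⟨V, hV, rfl⟩
    obtain ⟨C, hC, rfl⟩ := h𝒱sub hV
    rwa [compl_compl]
  obtain ⟨y, hy⟩ := hfin (h𝒱fin.image compl).toFinset
    (by rw [Set.Finite.coe_toFinset]; exact hsub)
  rw [Set.Finite.coe_toFinset] at hy
  have : y ∈ (⋃₀ 𝒱)ᶜ := by
    rw [Set.compl_sUnion]
    exact hy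
  rw [h𝒱cov, Set.compl_univ] at this
  exact this


/-- In a regular initially `κ`-compact space with `πχ(X) = κ` and no free
sequences of length `κ⁺`, every Shapirovskii π-base (given by a regressive
`γ`, a dense left-separated `⟨p_α : α < d(X)⟩` and open `S_{α,i}` satisfying
(a), (b), (c)) is point-`κ`: every point belongs to at most `κ` of the sets
`S_{α,i}`, `α < d(X)`, `i < κ`. -/
theorem shapirovskii_pi_base_point_kappa (X : Type u) [TopologicalSpace X] [T3Space X]
    (κ : Cardinal.{u}) (hκ : ℵ₀ ≤ κ)
    (hcomp : InitiallyCompact X κ)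
    (hπ : piChar X = κ)
    (hfree : ¬ ∃ p : Ordinal.{u} → X, IsFreeSeq ((Order.succ κ).ord) p)
    (lam : Cardinal.{u}) (hlam : lam = density X)
    (γ : Ordinal.{u} → Ordinal.{u}) (p : Ordinal.{u} → X)
    (S : Ordinal.{u} → Ordinal.{u} → Set X)
    (hγ : ∀ δ : Ordinal, 0 < δ → γ δ < δ)
    (hdense : Dense (p '' Set.Iio lam.ord))
    (hls : ∀ δ < lam.ord, closure (p '' Set.Iio δ) ∩ (p '' Set.Ico δ lam.ord) = ∅)
    (hS : ∀ α < lam.ord, ∀ i < κ.ord, IsOpen (S α i))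
    (ha : ∀ α < lam.ord, IsLocalPiBase (p α) {B : Set X | ∃ i < κ.ord, B = S α i})
    (hb : ∀ α < lam.ord,
      closure (p '' Set.Iio α) ∩
        (⋃ β ∈ Set.Ico α lam.ord, ⋃ i ∈ Set.Iio κ.ord, closure (S β i)) = ∅)
    (hc : ∀ ε δ : Ordinal, δ = κ.ord * ε → δ ≠ 0 → δ ≤ lam.ord →
      ∀ A : Finset (Ordinal × Ordinal),
        (∀ a ∈ A, γ δ ≤ a.1 ∧ a.1 < δ ∧ a.2 < κ.ord) →
        (⋂ a ∈ A, closure (S a.1 a.2)).Nonempty →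
        ((⋂ a ∈ A, closure (S a.1 a.2)) ∩ closure (p '' Set.Iio δ)).Nonempty) :
    ∀ x : X,
      #{a : Ordinal.{u} × Ordinal.{u} | a.1 < lam.ord ∧ a.2 < κ.ord ∧ x ∈ S a.1 a.2}
        ≤ Cardinal.lift.{u + 1} κ := by
  classical
  intro x
  by_contra hW
  set W := {a : Ordinal.{u} × Ordinal.{u} | a.1 < lam.ord ∧ a.2 < κ.ord ∧ x ∈ S a.1 a.2} with hWdef
  have hκ' : ℵ₀ ≤ Cardinal.lift.{u+1} κ := Cardinal.aleph0_le_lift.mpr hκ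
  have hWgt : Cardinal.lift.{u+1} κ < #W := not_le.mp hW
  set T : Set Ordinal.{u} := {α | α < lam.ord ∧ ∃ i, i < κ.ord ∧ x ∈ S α i} with hTdef
  have hIio : #(Iio κ.ord) = Cardinal.lift.{u+1} κ := by
    rw [Ordinal.mk_Iio_ordinal, Cardinal.card_ord]
  have hTgt : Cardinal.lift.{u+1} κ < #T := by
    by_contra hT
    rw [not_lt] at hT
    have hinj : Function.Injective (fun a : W =>
        ((⟨a.1.1, a.2.1, a.1.2, a.2.2.1, a.2.2.2⟩ : T), (⟨a.1.2, a.2.2.1⟩ : Iio κ.ord))) := by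
      rintro ⟨⟨a1, a2⟩, ha⟩ ⟨⟨b1, b2⟩, hb⟩ hab
      simp only [Prod.mk.injEq, Subtype.mk.injEq] at hab
      simp only [Subtype.mk.injEq, Prod.mk.injEq]
      exact ⟨hab.1, congrArg Subtype.val hab.2⟩
    have := Cardinal.mk_le_of_injective hinj
    rw [Cardinal.mk_prod, Cardinal.lift_id, Cardinal.lift_id, hIio] at this
    have : #W ≤ Cardinal.lift.{u+1} κ := by
      calc #W ≤ #T * Cardinal.lift.{u+1} κ := this
        _ ≤ Cardinal.lift.{u+1} κ * Cardinal.lift.{u+1} κ := by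
            exact mul_le_mul_left hT _
        _ = Cardinal.lift.{u+1} κ := Cardinal.mul_eq_self hκ'
    exact absurd this hW
  have hTsub : T ⊆ Iio lam.ord := fun α hα => hα.1
  -- the least σ with more than κ elements of T below it
  set Sig : Set Ordinal.{u} := {σ' | Cardinal.lift.{u+1} κ < #(T ∩ Iio σ' : Set Ordinal.{u})} with hSigdef
  have hSigne : lam.ord ∈ Sig := by
    have hTT : T ∩ Iio lam.ord = T := inter_eq_self_of_subset_left hTsub
    simp only [hSigdef, mem_setOf_eq, hTT]
    exact hTgt
  set σ := sInf Sig with hσdef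
  have hσmem : Cardinal.lift.{u+1} κ < #(T ∩ Iio σ : Set Ordinal.{u}) := csInf_mem ⟨_, hSigne⟩
  have hσlam : σ ≤ lam.ord := csInf_le (OrderBot.bddBelow _) hSigne
  have hmin : ∀ b < σ, #(T ∩ Iio b : Set Ordinal.{u}) ≤ Cardinal.lift.{u+1} κ := by
    intro b hb
    by_contra hcon
    have hbmem : b ∈ Sig := not_le.mp hcon
    exact absurd (csInf_le (OrderBot.bddBelow _) hbmem : σ ≤ b) (not_le.mpr hb)
  -- sups of small families stay below σ
  have hsupcov : ∀ s : Set Ordinal.{u}, s.Nonempty → (∀ y ∈ s, y < σ) →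
      #s ≤ Cardinal.lift.{u+1} κ → sSup s < σ := by
    intro s hne hlt hcard
    have hbdd : BddAbove s := ⟨σ, fun y hy => (hlt y hy).le⟩
    rcases lt_or_eq_of_le (csSup_le hne (fun b hb => (hlt b hb).le)) with h | h
    · exact h
    · exfalso
      have hcover : T ∩ Iio σ ⊆ ⋃ y : s, (T ∩ Iio y.1) := by
        intro t ht
        have htσ : t < sSup s := h ▸ ht.2
        obtain ⟨y, hy, hty⟩ := (lt_csSup_iff hbdd hne).mp htσ
        exact mem_iUnion.mpr ⟨⟨y, hy⟩, ht.1, hty⟩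
      have hle : #(T ∩ Iio σ : Set Ordinal.{u}) ≤ Cardinal.lift.{u+1} κ := by
        calc #(T ∩ Iio σ : Set Ordinal.{u}) ≤ #(⋃ y : s, (T ∩ Iio y.1) : Set Ordinal.{u}) :=
              Cardinal.mk_le_mk_of_subset hcover
          _ ≤ #s * ⨆ y : s, #(T ∩ Iio y.1 : Set Ordinal.{u}) := Cardinal.mk_iUnion_le _
          _ ≤ Cardinal.lift.{u+1} κ * Cardinal.lift.{u+1} κ := by
              apply mul_le_mul' hcard
              exact ciSup_le' (fun y => hmin y.1 (hlt y.1 y.2))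
          _ = Cardinal.lift.{u+1} κ := Cardinal.mul_eq_self hκ'
      exact absurd hle (not_le.mpr hσmem)
  have hσpos : 0 < σ := by
    have hne : (T ∩ Iio σ : Set Ordinal.{u}).Nonempty := by
      rw [Set.nonempty_iff_ne_empty]
      intro hcon
      rw [hcon] at hσmem
      simp at hσmem
    obtain ⟨t, ht⟩ := hne
    exact lt_of_le_of_lt (zero_le (a := t)) ht.2
  -- T is unbounded in σ
  have hTub : ∀ b < σ, ∃ t, t ∈ T ∧ b < t ∧ t < σ := by
    intro b hb
    by_contra hcon
    push_neg at hcon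
    have hsub : T ∩ Iio σ ⊆ (T ∩ Iio b) ∪ {b} := by
      rintro t ⟨ht, htσ⟩
      rcases lt_trichotomy t b with h | h | h
      · exact Or.inl ⟨ht, h⟩
      · exact Or.inr (by simp [h])
      · exact absurd htσ (not_lt.mpr (hcon t ht h))
    have : #(T ∩ Iio σ : Set Ordinal.{u}) ≤ Cardinal.lift.{u+1} κ := by
      calc #(T ∩ Iio σ : Set Ordinal.{u}) ≤ #(T ∩ Iio b : Set Ordinal.{u}) + #({b} : Set Ordinal.{u}) := by
            exact le_trans (Cardinal.mk_le_mk_of_subset hsub) (Cardinal.mk_union_le _ _)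
        _ ≤ Cardinal.lift.{u+1} κ + Cardinal.lift.{u+1} κ := by
            apply add_le_add (hmin b hb)
            rw [Cardinal.mk_singleton]
            exact le_trans (Cardinal.one_le_aleph0) hκ'
        _ = Cardinal.lift.{u+1} κ := Cardinal.add_eq_self hκ'
    exact absurd this (not_le.mpr hσmem)
  have hκord0 : κ.ord ≠ 0 := by
    intro h
    have : (ℵ₀ : Cardinal.{u}).ord ≤ κ.ord := Cardinal.ord_le_ord.mpr hκ
    rw [h, Cardinal.ord_aleph0] at this
    exact absurd this (not_le.mpr Ordinal.omega0_pos)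
  -- multiples of κ.ord are unbounded in σ
  have hmul : ∀ b < σ, ∃ d, κ.ord ∣ d ∧ b < d ∧ d < σ := by
    intro b hb
    have hks : b + κ.ord < σ := by
      by_contra hcon
      rw [not_lt] at hcon
      have hico : #(Ico b (b + κ.ord) : Set Ordinal.{u}) ≤ Cardinal.lift.{u+1} κ := by
        have hinj : Function.Injective (fun y : Ico b (b + κ.ord) =>
            (⟨y.1 - b, by
              have h1 : b ≤ y.1 := y.2.1
              by_contra hge
              simp only [mem_Iio, not_lt] at hge
              have : b + κ.ord ≤ b + (y.1 - b) := add_le_add_right hge b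
              rw [Ordinal.add_sub_cancel_of_le h1] at this
              exact absurd y.2.2 (not_lt.mpr this)⟩ : Iio κ.ord)) := by
          rintro ⟨y1, hy1⟩ ⟨y2, hy2⟩ hy
          simp only [Subtype.mk.injEq] at hy ⊢
          have := congrArg (b + ·) hy
          simpa [Ordinal.add_sub_cancel_of_le hy1.1, Ordinal.add_sub_cancel_of_le hy2.1] using this
        have := Cardinal.mk_le_of_injective hinj
        rwa [hIio] at this
      have hsub : T ∩ Iio σ ⊆ (T ∩ Iio b) ∪ Ico b (b + κ.ord) := by
        rintro t ⟨ht, htσ⟩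
        rcases lt_or_ge t b with h | h
        · exact Or.inl ⟨ht, h⟩
        · exact Or.inr ⟨h, lt_of_lt_of_le htσ hcon⟩
      have : #(T ∩ Iio σ : Set Ordinal.{u}) ≤ Cardinal.lift.{u+1} κ := by
        calc #(T ∩ Iio σ : Set Ordinal.{u})
            ≤ #(T ∩ Iio b : Set Ordinal.{u}) + #(Ico b (b + κ.ord) : Set Ordinal.{u}) :=
              le_trans (Cardinal.mk_le_mk_of_subset hsub) (Cardinal.mk_union_le _ _)
          _ ≤ Cardinal.lift.{u+1} κ + Cardinal.lift.{u+1} κ := add_le_add (hmin b hb) hico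
          _ = Cardinal.lift.{u+1} κ := Cardinal.add_eq_self hκ'
      exact absurd this (not_le.mpr hσmem)
    refine ⟨κ.ord * (b / κ.ord + 1), dvd_mul_right _ _, ?_, ?_⟩
    · rw [Ordinal.add_one_eq_succ]
      exact Ordinal.lt_mul_succ_div b hκord0
    · calc κ.ord * (b / κ.ord + 1) = κ.ord * (b / κ.ord) + κ.ord := by
            rw [Ordinal.add_one_eq_succ, Ordinal.mul_succ]
        _ ≤ b + κ.ord := add_le_add_left (Ordinal.mul_div_le b κ.ord) _
        _ < σ := hks
  -- there is β₀ below which γ presses down cofinally often (on multiples of κ.ord)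
  have hbeta : ∃ β₀ < σ, ∀ b < σ, ∃ d, κ.ord ∣ d ∧ γ d ≤ β₀ ∧ b < d ∧ d < σ := by
    by_contra hcon
    push_neg at hcon
    -- hcon : ∀ β₀ < σ, ∃ b < σ, ∀ d, κ.ord ∣ d → γ d ≤ β₀ → b < d → ¬ d < σ
    have hF : ∀ β, ∃ Fb, β < σ → (Fb < σ ∧ ∀ d, κ.ord ∣ d → γ d ≤ β → Fb < d → σ ≤ d) := by
      intro β
      by_cases hβ : β < σ
      · obtain ⟨b, hbσ, hb⟩ := hcon β hβ
        exact ⟨b, fun _ => ⟨hbσ, hb⟩⟩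
      · exact ⟨0, fun h => absurd h hβ⟩
    choose F hFsp using hF
    have hnxt : ∀ b, ∃ d, b < σ → (κ.ord ∣ d ∧ max (F b) b < d ∧ d < σ) := by
      intro b
      by_cases hb : b < σ
      · obtain ⟨d, hd1, hd2, hd3⟩ := hmul (max (F b) b) (max_lt (hFsp b hb).1 hb)
        exact ⟨d, fun _ => ⟨hd1, hd2, hd3⟩⟩
      · exact ⟨0, fun h => absurd h hb⟩
    choose nxt hnxtsp using hnxt
    set d : ℕ → Ordinal.{u} := fun n => nxt^[n+1] 0 with hddef
    have hd0 : d 0 = nxt 0 := rfl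
    have hdsucc : ∀ n, d (n+1) = nxt (d n) := by
      intro n
      show nxt^[n+2] 0 = nxt (nxt^[n+1] 0)
      rw [Function.iterate_succ_apply']
    have hdinv : ∀ n, κ.ord ∣ d n ∧ max (F (d n)) (d n) < d n.succ ∧ d n < σ := by
      intro n
      induction n with
      | zero =>
        obtain ⟨h1, h2, h3⟩ := hnxtsp 0 hσpos
        rw [← hd0] at h1 h2 h3
        obtain ⟨h1', h2', _⟩ := hnxtsp (d 0) h3
        rw [← hdsucc 0] at h2'
        exact ⟨h1, h2', h3⟩
      | succ n ih =>
        obtain ⟨h1, h2, h3⟩ := hnxtsp (d n) ih.2.2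
        rw [← hdsucc n] at h1 h2 h3
        obtain ⟨_, h2', _⟩ := hnxtsp (d (n+1)) h3
        rw [← hdsucc (n+1)] at h2'
        exact ⟨h1, h2', h3⟩
    have hdlt : ∀ n, d n < σ := fun n => (hdinv n).2.2
    have hdmono : ∀ n, d n < d (n+1) := fun n =>
      lt_of_le_of_lt (le_max_right _ _) (hdinv n).2.1
    have hdF : ∀ n, F (d n) < d (n+1) := fun n =>
      lt_of_le_of_lt (le_max_left _ _) (hdinv n).2.1
    set D := sSup (Set.range d) with hDdef
    have hrne : (Set.range d).Nonempty := ⟨d 0, 0, rfl⟩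
    have hrlt : ∀ y ∈ Set.range d, y < σ := by rintro y ⟨n, rfl⟩; exact hdlt n
    have hrcard : #(Set.range d) ≤ Cardinal.lift.{u+1} κ := by
      have h1 := Cardinal.mk_range_le_lift (f := d)
      simp only [Cardinal.mk_denumerable, Cardinal.lift_aleph0, Cardinal.lift_uzero] at h1
      exact le_trans h1 hκ'
    have hDσ : D < σ := hsupcov _ hrne hrlt hrcard
    have hbdd : BddAbove (Set.range d) := ⟨σ, fun y hy => (hrlt y hy).le⟩
    have hDle : ∀ n, d n ≤ D := fun n => le_csSup hbdd ⟨n, rfl⟩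
    have hDpos : 0 < D := by
      have h0 : (0:Ordinal) < d 0 := by
        rcases pos_iff_ne_zero.mp hσpos with _
        obtain ⟨h1, h2, h3⟩ := hnxtsp 0 hσpos
        rw [← hd0] at h2
        exact lt_of_le_of_lt (zero_le (a := _)) h2
      exact lt_of_lt_of_le h0 (hDle 0)
    have hDdvd : κ.ord ∣ D := by
      rcases lt_or_eq_of_le (Ordinal.mul_div_le D κ.ord) with hlt | heq
      · exfalso
        obtain ⟨y, ⟨n, rfl⟩, hn⟩ := (lt_csSup_iff hbdd hrne).mp hlt
        obtain ⟨e, he⟩ := (hdinv n).1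
        rw [he] at hn
        have h1 : D / κ.ord < e := by
          rwa [mul_lt_mul_iff_of_pos_left (pos_iff_ne_zero.mpr hκord0)] at hn
        have h2 : κ.ord * (D / κ.ord + 1) ≤ κ.ord * e := by
          apply mul_le_mul_right
          rwa [Ordinal.add_one_eq_succ, Order.succ_le_iff]
        have h3 : D < κ.ord * (D / κ.ord + 1) := by
          rw [Ordinal.add_one_eq_succ, Ordinal.mul_succ]
          conv_lhs => rw [← Ordinal.div_add_mod D κ.ord]
          exact add_lt_add_right (Ordinal.mod_lt D hκord0) _
        have h4 : d n ≤ D := hDle n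
        rw [he] at h4
        exact absurd (le_trans h2 h4) (not_le.mpr h3)
      · exact ⟨D / κ.ord, heq.symm⟩
    have hγD : γ D < D := hγ D hDpos
    obtain ⟨y, ⟨n, rfl⟩, hn⟩ := (lt_csSup_iff hbdd hrne).mp hγD
    have := (hFsp (d n) (hdlt n)).2 D hDdvd hn.le (lt_of_lt_of_le (hdF n) (hDle (n+1)))
    exact absurd hDσ (not_lt.mpr this)
  obtain ⟨β₀, hβ₀σ, hDub⟩ := hbeta
  set μ := (Order.succ κ).ord with hμdef
  have hμlim : Order.IsSuccLimit μ := Cardinal.isSuccLimit_ord (le_trans hκ (Order.lt_succ κ).le)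
  have hcardlt : ∀ ξ, ξ < μ → ξ.card ≤ κ := by
    intro ξ hξ
    exact Order.lt_succ_iff.mp (Cardinal.lt_ord.mp hξ)
  have hIex : ∀ α, ∃ i, α ∈ T → (i < κ.ord ∧ x ∈ S α i) := by
    intro α
    by_cases hα : α ∈ T
    · obtain ⟨-, i, hi, hxi⟩ := hα
      exact ⟨i, fun _ => ⟨hi, hxi⟩⟩
    · exact ⟨0, fun h => absurd h hα⟩
  choose I hIsp using hIex
  set g : Ordinal.{u} → Ordinal.{u} × Ordinal.{u} := WellFounded.fix Ordinal.lt_wf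
    (fun ξ ih => Classical.epsilon (fun ad : Ordinal.{u} × Ordinal.{u} =>
      ad.1 ∈ T ∧ β₀ < ad.1 ∧ ad.1 < σ ∧ (∀ ζ (h : ζ < ξ), (ih ζ h).2 < ad.1) ∧
      κ.ord ∣ ad.2 ∧ γ ad.2 ≤ β₀ ∧ ad.1 < ad.2 ∧ ad.2 < σ)) with hgdef
  have hgeq : ∀ ξ, g ξ = Classical.epsilon (fun ad : Ordinal.{u} × Ordinal.{u} =>
      ad.1 ∈ T ∧ β₀ < ad.1 ∧ ad.1 < σ ∧ (∀ ζ (h : ζ < ξ), (g ζ).2 < ad.1) ∧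
      κ.ord ∣ ad.2 ∧ γ ad.2 ≤ β₀ ∧ ad.1 < ad.2 ∧ ad.2 < σ) := by
    intro ξ
    rw [hgdef, WellFounded.fix_eq]
  have hgood : ∀ ξ, ξ < μ → ((g ξ).1 ∈ T ∧ β₀ < (g ξ).1 ∧ (g ξ).1 < σ ∧
      (∀ ζ, ζ < ξ → (g ζ).2 < (g ξ).1) ∧
      κ.ord ∣ (g ξ).2 ∧ γ (g ξ).2 ≤ β₀ ∧ (g ξ).1 < (g ξ).2 ∧ (g ξ).2 < σ) := by
    intro ξ
    induction ξ using Ordinal.induction with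
    | _ ξ IH =>
      intro hξμ
      have hsub : (∀ y ∈ (fun ζ => (g ζ).2) '' Iio ξ, y < σ) := by
        rintro y ⟨ζ, hζ, rfl⟩
        exact (IH ζ hζ (lt_trans hζ hξμ)).2.2.2.2.2.2.2
      have hsuplt : sSup ((fun ζ => (g ζ).2) '' Iio ξ) < σ := by
        rcases Set.eq_empty_or_nonempty ((fun ζ => (g ζ).2) '' Iio ξ) with he | hne
        · rw [he, csSup_empty]; exact hσpos
        · apply hsupcov _ hne hsub
          calc #((fun ζ => (g ζ).2) '' Iio ξ : Set Ordinal.{u}) ≤ #(Iio ξ) :=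
                Cardinal.mk_image_le
            _ = Cardinal.lift.{u+1} ξ.card := Ordinal.mk_Iio_ordinal ξ
            _ ≤ Cardinal.lift.{u+1} κ := Cardinal.lift_le.mpr (hcardlt ξ hξμ)
      have hbσ : max (sSup ((fun ζ => (g ζ).2) '' Iio ξ)) β₀ < σ := max_lt hsuplt hβ₀σ
      obtain ⟨α, hαT, hbα, hασ⟩ := hTub _ hbσ
      obtain ⟨δ', hδdvd, hγδ, hαδ, hδσ⟩ := hDub α hασ
      have hex : ∃ ad : Ordinal.{u} × Ordinal.{u},
          ad.1 ∈ T ∧ β₀ < ad.1 ∧ ad.1 < σ ∧ (∀ ζ (h : ζ < ξ), (g ζ).2 < ad.1) ∧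
          κ.ord ∣ ad.2 ∧ γ ad.2 ≤ β₀ ∧ ad.1 < ad.2 ∧ ad.2 < σ := by
        refine ⟨(α, δ'), hαT, lt_of_le_of_lt (le_max_right _ _) hbα, hασ, ?_, hδdvd, hγδ, hαδ, hδσ⟩
        intro ζ hζ
        have h1 : (g ζ).2 ≤ sSup ((fun ζ => (g ζ).2) '' Iio ξ) :=
          le_csSup ⟨σ, fun y hy => (hsub y hy).le⟩ ⟨ζ, hζ, rfl⟩
        exact lt_of_le_of_lt (le_trans h1 (le_max_left _ _)) hbα
      rw [hgeq ξ]
      exact Classical.epsilon_spec hex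
  have hmono : ∀ ζ ξ, ζ ≤ ξ → ξ < μ → (g ζ).1 < (g ξ).2 := by
    intro ζ ξ hζξ hξμ
    rcases eq_or_lt_of_le hζξ with rfl | h
    · exact (hgood ζ hξμ).2.2.2.2.2.2.1
    · have h1 : (g ζ).1 < (g ζ).2 := (hgood ζ (lt_trans h hξμ)).2.2.2.2.2.2.1
      have h2 : (g ζ).2 < (g ξ).1 := (hgood ξ hξμ).2.2.2.1 ζ h
      exact lt_trans (lt_trans h1 h2) (hgood ξ hξμ).2.2.2.2.2.2.1
  have hqex : ∀ ξ, ∃ y : X, ξ < μ →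
      (y ∈ closure (p '' Iio (g ξ).2) ∧
        ∀ ζ, ζ ≤ ξ → y ∈ closure (S (g ζ).1 (I (g ζ).1))) := by
    intro ξ
    by_cases hξμ : ξ < μ
    swap
    · exact ⟨x, fun h => absurd h hξμ⟩
    have hgξ := hgood ξ hξμ
    set Cl := closure (p '' Iio (g ξ).2) with hCldef
    set img := (fun ζ => closure (S (g ζ).1 (I (g ζ).1))) '' Iic ξ with himgdef
    have hicard : #img ≤ κ := by
      have h1 := Cardinal.mk_image_le_lift
        (f := fun ζ => closure (S (g ζ).1 (I (g ζ).1))) (s := Iic ξ)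
      have hIic : Iic ξ = Iio (ξ + 1) := by
        ext t
        simp [Order.lt_add_one_iff]
      have h2 : #(Iic ξ : Set Ordinal.{u}) = Cardinal.lift.{u+1} (ξ+1).card := by
        rw [hIic, Ordinal.mk_Iio_ordinal]
      have h3 : (ξ+1).card ≤ κ := by
        apply hcardlt
        rw [Ordinal.add_one_eq_succ]
        exact hμlim.succ_lt hξμ
      rw [h2] at h1
      rw [← Cardinal.lift_le.{u+1}]
      calc Cardinal.lift.{u+1} #img
          ≤ Cardinal.lift.{u, u+1} (Cardinal.lift.{u+1, u} (ξ+1).card) := h1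
        _ = Cardinal.lift.{u+1} (ξ+1).card := by
            rw [Cardinal.lift_lift]
        _ ≤ Cardinal.lift.{u+1} κ := Cardinal.lift_le.mpr h3
    have hccard : #(insert Cl img : Set (Set X)) ≤ κ := by
      calc #(insert Cl img : Set (Set X)) ≤ #img + 1 := Cardinal.mk_insert_le
        _ ≤ κ + κ := add_le_add hicard (Cardinal.one_le_aleph0.trans hκ)
        _ = κ := Cardinal.add_eq_self hκ
    have hclosed : ∀ C ∈ insert Cl img, IsClosed C := by
      rintro C (rfl | ⟨ζ, -, rfl⟩) <;> exact isClosed_closure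
    have key : ∀ 𝒟 : Finset (Set X), ↑𝒟 ⊆ insert Cl img → (⋂₀ (𝒟 : Set (Set X))).Nonempty := by
      intro 𝒟 h𝒟
      classical
      set 𝒟' := 𝒟.erase Cl with h𝒟'def
      have hsel : ∀ D ∈ 𝒟', ∃ ζ, ζ ≤ ξ ∧ D = closure (S (g ζ).1 (I (g ζ).1)) := by
        intro D hD
        have hD𝒞 : D ∈ insert Cl img := h𝒟 (Finset.mem_coe.mpr (Finset.mem_of_mem_erase hD))
        rcases Set.mem_insert_iff.mp hD𝒞 with rfl | hDimg
        · exact absurd rfl (Finset.mem_erase.mp hD).1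
        · obtain ⟨ζ, hζ, heq⟩ := hDimg
          exact ⟨ζ, hζ, heq.symm⟩
      set ψ : Set X → Ordinal.{u} × Ordinal.{u} := fun D =>
        if h : ∃ ζ, ζ ≤ ξ ∧ D = closure (S (g ζ).1 (I (g ζ).1)) then
          ((g h.choose).1, I (g h.choose).1) else (0, 0) with hψdef
      have hψ : ∀ D ∈ 𝒟', ∃ ζ, ζ ≤ ξ ∧ ψ D = ((g ζ).1, I (g ζ).1) ∧
          D = closure (S (g ζ).1 (I (g ζ).1)) := by
        intro D hD
        have hPD := hsel D hD
        refine ⟨hPD.choose, hPD.choose_spec.1, ?_, hPD.choose_spec.2⟩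
        rw [hψdef]
        simp only [dif_pos hPD]
      obtain ⟨ε, hε⟩ := hgξ.2.2.2.2.1
      have hδpos : (g ξ).2 ≠ 0 := by
        have : (0:Ordinal) < (g ξ).2 :=
          lt_trans (lt_of_le_of_lt (zero_le (a := β₀)) hgξ.2.1) hgξ.2.2.2.2.2.2.1
        exact this.ne'
      have hδlam : (g ξ).2 ≤ lam.ord := (hgξ.2.2.2.2.2.2.2.le).trans hσlam
      have hcond : ∀ a ∈ 𝒟'.image ψ, γ (g ξ).2 ≤ a.1 ∧ a.1 < (g ξ).2 ∧ a.2 < κ.ord := by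
        intro a ha
        obtain ⟨D, hD, haD⟩ := Finset.mem_image.mp ha
        obtain ⟨ζ, hζξ, hψD, -⟩ := hψ D hD
        subst haD
        rw [hψD]
        have hgζ := hgood ζ (lt_of_le_of_lt hζξ hξμ)
        refine ⟨le_trans hgξ.2.2.2.2.2.1 hgζ.2.1.le, hmono ζ ξ hζξ hξμ, (hIsp _ hgζ.1).1⟩
      have hnonempty : (⋂ a ∈ 𝒟'.image ψ, closure (S a.1 a.2)).Nonempty := by
        refine ⟨x, ?_⟩
        rw [Set.mem_iInter₂]
        intro a ha
        obtain ⟨D, hD, haD⟩ := Finset.mem_image.mp ha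
        obtain ⟨ζ, hζξ, hψD, -⟩ := hψ D hD
        subst haD
        rw [hψD]
        have hgζ := hgood ζ (lt_of_le_of_lt hζξ hξμ)
        exact subset_closure (hIsp _ hgζ.1).2
      obtain ⟨y, hy1, hy2⟩ := hc ε (g ξ).2 hε hδpos hδlam (𝒟'.image ψ) hcond hnonempty
      refine ⟨y, ?_⟩
      rw [Set.mem_sInter]
      intro D hD
      rw [Finset.mem_coe] at hD
      by_cases hDCl : D = Cl
      · subst hDCl
        exact hy2
      · have hD' : D ∈ 𝒟' := Finset.mem_erase.mpr ⟨hDCl, hD⟩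
        obtain ⟨ζ, hζξ, hψD, hDeq⟩ := hψ D hD'
        have hmem : ψ D ∈ 𝒟'.image ψ := Finset.mem_image_of_mem ψ hD'
        have := Set.mem_iInter₂.mp hy1 (ψ D) hmem
        rw [hψD] at this
        rw [hDeq]
        exact this
    obtain ⟨y, hy⟩ := fip_of_initiallyCompact hcomp (insert Cl img) hclosed hccard key
    rw [Set.mem_sInter] at hy
    refine ⟨y, fun _ => ⟨hy Cl (Set.mem_insert _ _), ?_⟩⟩
    intro ζ hζ
    exact hy _ (Set.mem_insert_of_mem _ ⟨ζ, hζ, rfl⟩)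
  set q : Ordinal.{u} → X := fun ξ => Classical.choose (hqex ξ) with hqdef
  have hq : ∀ ξ, ξ < μ → (q ξ ∈ closure (p '' Iio (g ξ).2) ∧
      ∀ ζ, ζ ≤ ξ → q ξ ∈ closure (S (g ζ).1 (I (g ζ).1))) :=
    fun ξ hξ => Classical.choose_spec (hqex ξ) hξ
  apply hfree
  refine ⟨q, ?_⟩
  intro c hcμ
  rcases eq_or_ne c 0 with rfl | hc0
  · have h0 : q '' Iio (0:Ordinal.{u}) = ∅ := by
      rw [Set.eq_empty_iff_forall_notMem]
      rintro y ⟨ζ, hζ, rfl⟩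
      exact not_lt_zero (a := ζ) hζ
    rw [h0, closure_empty, Set.empty_inter]
  · have hcpos : 0 < c := pos_iff_ne_zero.mpr hc0
    have hgc := hgood c hcμ
    set δs := sSup ((fun ζ => (g ζ).2) '' Iio c) with hδsdef
    have hub : ∀ y ∈ (fun ζ => (g ζ).2) '' Iio c, y ≤ (g c).1 := by
      rintro y ⟨ζ, hζ, rfl⟩
      exact (hgc.2.2.2.1 ζ hζ).le
    have hbdd : BddAbove ((fun ζ => (g ζ).2) '' Iio c) := ⟨(g c).1, hub⟩
    have hne : ((fun ζ => (g ζ).2) '' Iio c).Nonempty := ⟨(g 0).2, 0, hcpos, rfl⟩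
    have hδsA : δs ≤ (g c).1 := csSup_le hne hub
    have hδslam : δs < lam.ord := lt_of_le_of_lt hδsA (lt_of_lt_of_le hgc.2.2.1 hσlam)
    have sub1 : closure (q '' Iio c) ⊆ closure (p '' Iio δs) := by
      apply closure_minimal _ isClosed_closure
      rintro y ⟨ζ, hζ, rfl⟩
      have h1 := (hq ζ (lt_trans hζ hcμ)).1
      exact closure_mono (Set.image_mono (Set.Iio_subset_Iio (le_csSup hbdd ⟨ζ, hζ, rfl⟩))) h1
    have sub2 : closure (q '' Ico c μ) ⊆ closure (S (g c).1 (I (g c).1)) := by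
      apply closure_minimal _ isClosed_closure
      rintro y ⟨ζ, hζ, rfl⟩
      exact (hq ζ hζ.2).2 c hζ.1
    have big : closure (S (g c).1 (I (g c).1)) ⊆
        ⋃ β ∈ Set.Ico δs lam.ord, ⋃ i ∈ Set.Iio κ.ord, closure (S β i) := by
      intro y hy
      have hmem1 : (g c).1 ∈ Set.Ico δs lam.ord := ⟨hδsA, hgc.1.1⟩
      have hmem2 : I (g c).1 ∈ Set.Iio κ.ord := (hIsp _ hgc.1).1
      exact Set.mem_biUnion hmem1 (Set.mem_biUnion hmem2 hy)
    rw [Set.eq_empty_iff_forall_notMem]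
    rintro y ⟨hy1, hy2⟩
    have hemp := hb δs hδslam
    rw [Set.eq_empty_iff_forall_notMem] at hemp
    exact hemp y ⟨sub1 hy1, big (sub2 hy2)⟩
end

section
/- Let X be a regular space and κ = max{πχ(X), t(X)}. If d(X) ≤ κ⁺, then X has a point-κ π-base. -/
open Cardinal Set

/-- The tightness of `X`: the least cardinal `κ` such that whenever
`x ∈ cl A` there is `B ⊆ A` with `|B| ≤ κ` and `x ∈ cl B`. -/
noncomputable def tightness (X : Type u) [TopologicalSpace X] : Cardinal.{u} :=
  sInf {κ : Cardinal | ∀ (A : Set X) (x : X), x ∈ closure A →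
    ∃ B ⊆ A, #B ≤ κ ∧ x ∈ closure B}

def IsPiBase {X : Type u} [TopologicalSpace X] (ℛ : Set (Set X)) : Prop :=
  (∀ R ∈ ℛ, IsOpen R ∧ R.Nonempty) ∧
  ∀ U : Set X, IsOpen U → U.Nonempty → ∃ R ∈ ℛ, R ⊆ U

/-- If `X` is regular, `κ = max {πχ(X), t(X)}`, and `d(X) ≤ κ⁺`, then `X`
has a point-`κ` π-base. -/
theorem point_kappa_pi_base_of_density_le_succ (X : Type u) [TopologicalSpace X]
    [T3Space X] (κ : Cardinal.{u})
    (hκ : κ = max (piChar X) (tightness X))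
    (hd : density X ≤ Order.succ κ) :
    ∃ ℛ : Set (Set X), IsPiBase ℛ ∧ ∀ x : X, #{R : Set X | R ∈ ℛ ∧ x ∈ R} ≤ κ := by
  have hπ : piChar X ≤ κ := by rw [hκ]; exact le_max_left _ _
  have ht : tightness X ≤ κ := by rw [hκ]; exact le_max_right _ _
  -- choose small local π-bases
  have hB : ∀ x : X, ∃ ℬ : Set (Set X), IsLocalPiBase x ℬ ∧ #ℬ ≤ κ := by
    intro x
    have hne : {c : Cardinal | ∃ ℬ : Set (Set X), #ℬ = c ∧ IsLocalPiBase x ℬ}.Nonempty :=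
      ⟨_, {U : Set X | IsOpen U ∧ x ∈ U}, rfl,
        ⟨fun B hB => ⟨hB.1, ⟨x, hB.2⟩⟩, fun U hU hx => ⟨U, ⟨hU, hx⟩, subset_rfl⟩⟩⟩
    obtain ⟨ℬ, hcard, hloc⟩ := csInf_mem hne
    refine ⟨ℬ, hloc, ?_⟩
    rw [hcard]
    exact (le_ciSup (Cardinal.bddAbove_range _) x).trans hπ
  choose ℬ hℬloc hℬcard using hB
  -- tightness property
  have htight : ∀ (A : Set X) (x : X), x ∈ closure A →
      ∃ B ⊆ A, #B ≤ κ ∧ x ∈ closure B := by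
    have hmem := csInf_mem (s := {κ' : Cardinal | ∀ (A : Set X) (x : X), x ∈ closure A →
        ∃ B ⊆ A, #B ≤ κ' ∧ x ∈ closure B})
      ⟨#X, fun A x hx => ⟨A, subset_rfl, Cardinal.mk_set_le A, hx⟩⟩
    intro A x hx
    obtain ⟨B, hBA, hBc, hxB⟩ := hmem A x hx
    exact ⟨B, hBA, hBc.trans ht, hxB⟩
  -- dense set
  obtain ⟨D, hDdense, hDcard⟩ : ∃ D : Set X, Dense D ∧ #D ≤ Order.succ κ := by
    obtain ⟨D, hdense, hc⟩ := csInf_mem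
      (s := {c : Cardinal | ∃ s : Set X, Dense s ∧ #s = c}) ⟨_, univ, dense_univ, rfl⟩
    exact ⟨D, hdense, hc ▸ hd⟩
  by_cases hκinf : ℵ₀ ≤ κ
  · -- main case
    set o : Ordinal.{u} := (#D).ord with ho
    obtain ⟨e⟩ : Nonempty (o.ToType ≃ ↥D) := Cardinal.eq.mp (Cardinal.mk_ord_toType _)
    haveI : IsWellOrder o.ToType (· < ·) := isWellOrder_lt
    set g : o.ToType → X := fun β => (e β : X) with hg
    have hginj : Function.Injective g := Subtype.coe_injective.comp e.injective
    have hrange : range g = D := by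
      have : range g = Subtype.val '' (range e) := (range_comp _ _).symm ▸ rfl
      rw [this, e.surjective.range_eq, image_univ, Subtype.range_coe]
    set Dset : o.ToType → Set X := fun α => g '' {β | β < α} with hDset
    set W : o.ToType → Set (Set X) := fun α => {V | V ∈ ℬ (g α) ∧ V ∩ Dset α = ∅} with hW
    refine ⟨⋃ α, W α, ⟨?_, ?_⟩, ?_⟩
    · rintro R hR
      obtain ⟨α, hα⟩ := mem_iUnion.mp hR
      exact (hℬloc (g α)).1 R hα.1
    · intro U hU hUne
      obtain ⟨x, hxU⟩ := hUne
      have hclo : x ∈ closure D := hDdense x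
      obtain ⟨y, hyU, hyD⟩ := mem_closure_iff.mp hclo U hU hxU
      have hSne : {β : o.ToType | g β ∈ U}.Nonempty := by
        refine ⟨e.symm ⟨y, hyD⟩, ?_⟩
        simp only [mem_setOf_eq, hg, Equiv.apply_symm_apply]
        exact hyU
      obtain ⟨α, hαU, hαmin⟩ := wellFounded_lt.has_min _ hSne
      obtain ⟨V, hV, hVU⟩ := (hℬloc (g α)).2 U hU hαU
      refine ⟨V, mem_iUnion.mpr ⟨α, hV, ?_⟩, hVU⟩
      rw [eq_empty_iff_forall_notMem]
      rintro z ⟨hzV, β, hβα, rfl⟩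
      exact hαmin β (hVU hzV) hβα
    · intro x
      set A : Set o.ToType := {α | ∃ V ∈ W α, x ∈ V} with hA
      have hsub : {R : Set X | R ∈ ⋃ α, W α ∧ x ∈ R} ⊆ ⋃ α ∈ A, ℬ (g α) := by
        rintro R ⟨hR, hx⟩
        obtain ⟨α, hα⟩ := mem_iUnion.mp hR
        exact mem_biUnion ⟨R, hα, hx⟩ hα.1
      have hsup : #A * κ ≤ κ := by
        nth_rewrite 2 [← Cardinal.mul_eq_self hκinf]
        refine mul_le_mul' ?_ le_rfl
        -- #A ≤ κ
        by_cases hDκ : #D ≤ κ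
        · exact (Cardinal.mk_set_le A).trans ((Cardinal.mk_ord_toType _).le.trans hDκ)
        · have hDeq : #D = Order.succ κ :=
            le_antisymm hDcard (Order.succ_le_of_lt (not_le.mp hDκ))
          have hxcl : x ∈ closure (range g) := hrange ▸ hDdense x
          obtain ⟨B, hBsub, hBcard, hxB⟩ := htight (range g) x hxcl
          set S : Set o.ToType := g ⁻¹' B with hS
          have hScard : #S ≤ κ :=
            (Cardinal.mk_preimage_of_injective g B hginj).trans hBcard
          have hbdd : Set.Bounded (· < ·) S := by
            rw [← Set.not_unbounded_iff]
            intro hub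
            have hcof := Order.cof_le (s := S) (fun a => let ⟨b, hb, h⟩ := hub a; ⟨b, hb, not_lt.mp h⟩)
            rw [Ordinal.cof_toType] at hcof
            have hcofval : o.cof = Order.succ κ := by
              rw [ho, hDeq]
              exact (Cardinal.isRegular_succ hκinf).cof_eq
            exact absurd ((hcofval ▸ hcof).trans hScard) (not_le.mpr (Order.lt_succ κ))
          obtain ⟨γ, hγ⟩ := hbdd
          have hBDset : B ⊆ Dset γ := by
            intro b hb
            obtain ⟨β, rfl⟩ := hBsub hb
            exact ⟨β, hγ β hb, rfl⟩
          have hAsub : A ⊆ {β | β < γ} := by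
            rintro α ⟨V, ⟨hVB, hVD⟩, hxV⟩
            by_contra hlt
            have hge : γ ≤ α := not_lt.mp (by simpa using hlt)
            have hDmono : Dset γ ⊆ Dset α :=
              image_mono fun β (hβ : β < γ) => lt_of_lt_of_le hβ hge
            have hxcl2 : x ∈ closure (Dset α) :=
              closure_mono (hBDset.trans hDmono) hxB
            obtain ⟨z, hzV, hzD⟩ := mem_closure_iff.mp hxcl2 V ((hℬloc (g α)).1 V hVB).1 hxV
            exact absurd hVD (by rw [eq_empty_iff_forall_notMem]; push_neg; exact ⟨z, hzV, hzD⟩)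
          have h1 : #A ≤ #{β : o.ToType | β < γ} := Cardinal.mk_le_mk_of_subset hAsub
          have h2 : #{β : o.ToType // β < γ} =
              ((Ordinal.typein (α := o.ToType) (· < ·)).toRelEmbedding γ).card :=
            Ordinal.card_typein γ
          have h3 := Ordinal.typein_lt_self (o := o) γ
          have h3' : ((Ordinal.typein (α := o.ToType) (· < ·)).toRelEmbedding γ).card < #↑D :=
            Cardinal.lt_ord.mp h3
          exact h1.trans (h2.le.trans (Order.lt_succ_iff.mp (h3'.trans_eq hDeq)))
      calc #{R : Set X | R ∈ ⋃ α, W α ∧ x ∈ R}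
          ≤ #(⋃ α ∈ A, ℬ (g α) : Set (Set X)) := Cardinal.mk_le_mk_of_subset hsub
        _ ≤ #A * ⨆ α : A, #(ℬ (g α.1)) := Cardinal.mk_biUnion_le _ _
        _ ≤ #A * κ := by
            rcases isEmpty_or_nonempty A with hE | hN
            · simp
            · exact mul_le_mul' le_rfl (ciSup_le' fun α => hℬcard _)
        _ ≤ κ := hsup
  · -- finite κ case
    have hκ0 : κ < ℵ₀ := not_le.mp hκinf
    have hDfin : D.Finite := by
      rw [← Cardinal.lt_aleph0_iff_set_finite]
      exact hDcard.trans_lt (Cardinal.isSuccLimit_aleph0.succ_lt hκ0)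
    have hDuniv : D = Set.univ := by
      rw [← hDfin.isClosed.closure_eq, hDdense.closure_eq]
    have hXfin : Finite X := Set.finite_univ_iff.mp (hDuniv ▸ hDfin)
    rcases isEmpty_or_nonempty X with hE | hN
    · refine ⟨∅, ⟨fun R hR => absurd hR (notMem_empty R), ?_⟩, fun x => hE.elim x⟩
      rintro U _ ⟨x, -⟩
      exact hE.elim x
    · have hdisc : DiscreteTopology X := Finite.instDiscreteTopology
      have h1κ : 1 ≤ κ := by
        rw [hκ]
        refine le_max_of_le_left ?_
        obtain ⟨x⟩ := hN
        refine le_trans ?_ (le_ciSup (Cardinal.bddAbove_range _) x)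
        refine le_csInf ⟨_, ℬ x, rfl, hℬloc x⟩ ?_
        rintro c ⟨ℬ', rfl, hloc⟩
        obtain ⟨B, hBm, -⟩ := hloc.2 Set.univ isOpen_univ (mem_univ x)
        rw [Cardinal.one_le_iff_ne_zero, Cardinal.mk_ne_zero_iff]
        exact ⟨B, hBm⟩
      refine ⟨range (fun x : X => {x}), ⟨?_, ?_⟩, ?_⟩
      · rintro R ⟨y, rfl⟩
        exact ⟨isOpen_discrete _, ⟨y, rfl⟩⟩
      · rintro U hU ⟨y, hy⟩
        exact ⟨{y}, mem_range_self y, singleton_subset_iff.mpr hy⟩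
      · intro x
        have : {R : Set X | R ∈ range (fun x : X => {x}) ∧ x ∈ R} ⊆ {({x} : Set X)} := by
          rintro R ⟨⟨y, rfl⟩, hx⟩
          simp only [mem_singleton_iff] at hx ⊢
          rw [hx]
        exact (Cardinal.mk_le_mk_of_subset this).trans (by simpa using h1κ)
end
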